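/- arXiv:2508.15961 — 5 statements merged into one kernel-verified Lean document; each statement's English description precedes it below -/
import Mathlib

section
/- Let f:[0,a]→[0,∞) be continuous and satisfy f(x) ≤ M/√x + C∫₀ˣ f(t)/√(x−t) dt for all 0 < x ≤ a, where M, C ≥ 0. Then f(x) ≤ M(1/√x + πC)(2πC²x·e^{πC²x} + 1) for all 0 < x ≤ a. -/
open MeasureTheory Real intervalIntegral
open scoped ENNReal

section SingularGronwallAux

lemma meas_one_div_sqrt (s : ℝ) : Measurable (fun t : ℝ => 1 / Real.sqrt (t - s)) :=
  (measurable_const.div ((Real.continuous_sqrt.comp (continuous_id.sub continuous_const)).measurable))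

lemma sqrt_int (s x : ℝ) (h : s ≤ x) :
    IntervalIntegrable (fun t => 1 / Real.sqrt (t - s)) volume s x := by
  have h0 : IntervalIntegrable (fun u : ℝ => u ^ (-(1/2) : ℝ)) volume 0 (x - s) :=
    intervalIntegrable_rpow' (by norm_num)
  have h1 := h0.comp_sub_right s
  simp only [zero_add, sub_add_cancel] at h1
  apply h1.mono_fun (meas_one_div_sqrt s).aestronglyMeasurable
  rw [Set.uIoc_of_le h]
  refine Filter.eventually_of_mem (self_mem_ae_restrict measurableSet_Ioc) ?_
  intro t ht
  have h2 : (0:ℝ) ≤ t - s := by linarith [ht.1]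
  simp only [Real.norm_eq_abs]
  rw [Real.rpow_neg h2, ← Real.sqrt_eq_rpow, abs_of_nonneg (by positivity), abs_of_nonneg (by positivity), one_div]

lemma sqrt_int' (s x : ℝ) (h : s ≤ x) :
    IntervalIntegrable (fun t => 1 / Real.sqrt (x - t)) volume s x := by
  have h0 := (sqrt_int 0 (x - s) (by linarith)).comp_sub_left x
  simp only [sub_zero, sub_sub_cancel] at h0
  exact h0.symm

lemma beta_meas (s x : ℝ) :
    Measurable (fun t : ℝ => 1 / (Real.sqrt (t - s) * Real.sqrt (x - t))) := by
  apply measurable_const.div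
  exact ((Real.continuous_sqrt.comp (continuous_id.sub continuous_const)).mul
    (Real.continuous_sqrt.comp (continuous_const.sub continuous_id))).measurable

lemma beta_integrable (s x : ℝ) (h : s < x) :
    IntervalIntegrable (fun t => 1 / (Real.sqrt (t - s) * Real.sqrt (x - t))) volume s x := by
  set m := (s + x) / 2 with hm
  have hsm : s < m := by simp only [hm]; linarith
  have hmx : m < x := by simp only [hm]; linarith
  have half1 : IntervalIntegrable (fun t => 1 / (Real.sqrt (t - s) * Real.sqrt (x - t))) volume s m := by
    have hb : IntervalIntegrable (fun t => (1 / Real.sqrt (x - m)) * (1 / Real.sqrt (t - s))) volume s m :=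
      (sqrt_int s m hsm.le).const_mul _
    apply hb.mono_fun (beta_meas s x).aestronglyMeasurable
    rw [Set.uIoc_of_le hsm.le]
    refine Filter.eventually_of_mem (self_mem_ae_restrict measurableSet_Ioc) ?_
    intro t ht
    simp only [Real.norm_eq_abs]
    have h1 : (0:ℝ) < t - s := by linarith [ht.1]
    have h2 : (0:ℝ) < x - m := by linarith
    have h3 : x - m ≤ x - t := by linarith [ht.2]
    rw [abs_of_nonneg (by positivity), abs_of_nonneg (by positivity)]
    rw [div_mul_div_comm, one_mul]
    apply one_div_le_one_div_of_le (by positivity)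
    rw [mul_comm]
    exact mul_le_mul_of_nonneg_left (Real.sqrt_le_sqrt h3) (Real.sqrt_nonneg _)
  have half2 : IntervalIntegrable (fun t => 1 / (Real.sqrt (t - s) * Real.sqrt (x - t))) volume m x := by
    have hb : IntervalIntegrable (fun t => (1 / Real.sqrt (m - s)) * (1 / Real.sqrt (x - t))) volume m x :=
      (sqrt_int' m x hmx.le).const_mul _
    apply hb.mono_fun (beta_meas s x).aestronglyMeasurable
    rw [Set.uIoc_of_le hmx.le]
    refine Filter.eventually_of_mem (self_mem_ae_restrict measurableSet_Ioc) ?_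
    intro t ht
    simp only [Real.norm_eq_abs]
    have h2 : (0:ℝ) < m - s := by linarith
    have h3 : m - s ≤ t - s := by linarith [ht.1]
    rcases eq_or_lt_of_le ht.2 with hx | hx
    · rw [hx]
      simp [Real.sqrt_eq_zero']
    have h1 : (0:ℝ) < x - t := by linarith
    rw [abs_of_nonneg (by positivity), abs_of_nonneg (by positivity)]
    rw [div_mul_div_comm, one_mul]
    apply one_div_le_one_div_of_le (by positivity)
    exact mul_le_mul_of_nonneg_right (Real.sqrt_le_sqrt h3) (Real.sqrt_nonneg _)
  exact half1.trans half2

lemma beta_eq (s x : ℝ) (h : s < x) :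
    ∫ t in s..x, 1 / (Real.sqrt (t - s) * Real.sqrt (x - t)) = Real.pi := by
  have hxs : (0:ℝ) < x - s := by linarith
  set F : ℝ → ℝ := fun t => Real.arcsin ((2 * t - s - x) / (x - s)) with hF
  have hcont : ContinuousOn F (Set.Icc s x) :=
    (Real.continuous_arcsin.comp (by continuity)).continuousOn
  have hderiv : ∀ t ∈ Set.Ioo s x,
      HasDerivAt F (1 / (Real.sqrt (t - s) * Real.sqrt (x - t))) t := by
    intro t ht
    have h1 : (0:ℝ) < t - s := by linarith [ht.1]
    have h2 : (0:ℝ) < x - t := by linarith [ht.2]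
    set u : ℝ := (2 * t - s - x) / (x - s) with hu
    have hu1 : u ≠ -1 := by
      intro hc; rw [hu, div_eq_iff hxs.ne'] at hc; nlinarith
    have hu2 : u ≠ 1 := by
      intro hc; rw [hu, div_eq_iff hxs.ne'] at hc; nlinarith
    have hinner : HasDerivAt (fun t : ℝ => (2 * t - s - x) / (x - s)) (2 / (x - s)) t := by
      have := (((hasDerivAt_id t).const_mul 2).sub_const s).sub_const x
      simpa [div_eq_mul_inv] using this.mul_const (x - s)⁻¹
    have harc := (Real.hasDerivAt_arcsin hu1 hu2).comp t hinner
    refine harc.congr_deriv ?_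
    have hval : 1 - u ^ 2 = 4 * (t - s) * (x - t) / (x - s) ^ 2 := by
      rw [hu]; field_simp; ring
    rw [hval]
    have hs4 : Real.sqrt (4 * (t - s) * (x - t) / (x - s) ^ 2)
        = 2 * Real.sqrt (t - s) * Real.sqrt (x - t) / (x - s) := by
      rw [Real.sqrt_div' _ (by positivity), Real.sqrt_mul (by positivity), Real.sqrt_mul (by norm_num : (0:ℝ) ≤ 4),
        Real.sqrt_sq hxs.le, show (4:ℝ) = 2 ^ 2 by norm_num, Real.sqrt_sq (by norm_num : (0:ℝ) ≤ 2)]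
    rw [hs4]
    have hst : Real.sqrt (t - s) > 0 := Real.sqrt_pos.2 h1
    have hxt : Real.sqrt (x - t) > 0 := Real.sqrt_pos.2 h2
    field_simp
  have := intervalIntegral.integral_eq_sub_of_hasDerivAt_of_le h.le hcont hderiv (beta_integrable s x h)
  rw [this, hF]
  have e1 : (2 * x - s - x) / (x - s) = 1 := by field_simp; ring
  have e2 : (2 * s - s - x) / (x - s) = -1 := by field_simp; ring
  simp only [e1, e2, Real.arcsin_one, Real.arcsin_neg_one]
  ring

-- generic: a ≤ b, c ≥ 0 ⇒ a/c ≤ b/c (allowing c = 0)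
lemma my_div_le_div (a b c : ℝ) (hab : a ≤ b) (hc : 0 ≤ c) : a / c ≤ b / c := by
  rcases eq_or_lt_of_le hc with h | h
  · simp [← h]
  · exact div_le_div_of_nonneg_right hab h.le

lemma div_sqrt_integrable {f : ℝ → ℝ} (hf : Continuous f) (u v : ℝ) (huv : u ≤ v) :
    IntervalIntegrable (fun s => f s / Real.sqrt (v - s)) volume u v := by
  obtain ⟨B, hB⟩ := (isCompact_Icc : IsCompact (Set.Icc u v)).exists_bound_of_continuousOn
    hf.continuousOn
  have hb : IntervalIntegrable (fun s => B * (1 / Real.sqrt (v - s))) volume u v :=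
    (sqrt_int' u v huv).const_mul B
  apply hb.mono_fun (hf.measurable.div
    ((Real.continuous_sqrt.comp (continuous_const.sub continuous_id)).measurable)).aestronglyMeasurable
  rw [Set.uIoc_of_le huv]
  refine Filter.eventually_of_mem (self_mem_ae_restrict measurableSet_Ioc) ?_
  intro s hs
  have hs' : s ∈ Set.Icc u v := ⟨hs.1.le, hs.2⟩
  have hBnn : 0 ≤ B := le_trans (norm_nonneg _) (hB u ⟨le_refl u, huv⟩)
  simp only [Real.norm_eq_abs]
  show |f s / Real.sqrt (v - s)| ≤ |B * (1 / Real.sqrt (v - s))|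
  rw [abs_div, abs_of_nonneg (Real.sqrt_nonneg _), abs_of_nonneg (by positivity : (0:ℝ) ≤ B * (1 / Real.sqrt (v - s))), mul_one_div]
  exact my_div_le_div _ _ _ (by simpa [Real.norm_eq_abs] using hB s hs') (Real.sqrt_nonneg _)

lemma sqrt_int_value (t : ℝ) (ht : 0 ≤ t) :
    ∫ s in (0:ℝ)..t, 1 / Real.sqrt (t - s) = 2 * Real.sqrt t := by
  have h1 : ∫ s in (0:ℝ)..t, 1 / Real.sqrt (t - s)
      = ∫ u in (t - t)..(t - 0), 1 / Real.sqrt u :=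
    intervalIntegral.integral_comp_sub_left (fun u => 1 / Real.sqrt u) t
  rw [h1]
  simp only [sub_self, sub_zero]
  have h2 : ∫ u in (0:ℝ)..t, 1 / Real.sqrt u = ∫ u in (0:ℝ)..t, u ^ (-(1/2) : ℝ) := by
    apply intervalIntegral.integral_congr
    intro u hu
    rw [Set.uIcc_of_le ht] at hu
    rcases eq_or_lt_of_le hu.1 with h | h
    · rw [← h]; simp [Real.sqrt_zero, Real.zero_rpow (by norm_num : (-(1/2):ℝ) ≠ 0)]
    · show 1 / Real.sqrt u = u ^ (-(1/2) : ℝ)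
      rw [Real.rpow_neg h.le, ← Real.sqrt_eq_rpow, one_div]
  rw [h2, integral_rpow (Or.inl (by norm_num))]
  have : (-(1/2) : ℝ) + 1 = 1/2 := by norm_num
  rw [this, Real.zero_rpow (by norm_num : (1/2:ℝ) ≠ 0), ← Real.sqrt_eq_rpow]
  ring


lemma inner_nonneg {f : ℝ → ℝ} (hfnn : ∀ s, 0 ≤ f s) (t : ℝ) (ht : 0 ≤ t) :
    0 ≤ ∫ s in (0:ℝ)..t, f s / Real.sqrt (t - s) :=
  intervalIntegral.integral_nonneg ht fun s _ => div_nonneg (hfnn s) (Real.sqrt_nonneg _)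

lemma inner_le {f : ℝ → ℝ} (hf : Continuous f) {B t : ℝ} (ht : 0 ≤ t)
    (hB : ∀ s ∈ Set.Icc 0 t, f s ≤ B) :
    ∫ s in (0:ℝ)..t, f s / Real.sqrt (t - s) ≤ B * (2 * Real.sqrt t) := by
  have h1 : ∫ s in (0:ℝ)..t, f s / Real.sqrt (t - s)
      ≤ ∫ s in (0:ℝ)..t, B * (1 / Real.sqrt (t - s)) := by
    apply intervalIntegral.integral_mono_on ht (div_sqrt_integrable hf 0 t ht)
      ((sqrt_int' 0 t ht).const_mul B)
    intro s hs
    rw [mul_one_div]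
    exact my_div_le_div _ _ _ (hB s hs) (Real.sqrt_nonneg _)
  calc _ ≤ _ := h1
    _ = B * (2 * Real.sqrt t) := by
        rw [intervalIntegral.integral_const_mul, sqrt_int_value t ht]

lemma J_meas {f : ℝ → ℝ} (hf : Continuous f) :
    StronglyMeasurable (fun t : ℝ => ∫ s in Set.Ioc (0:ℝ) t, f s / Real.sqrt (t - s)) := by
  set F : ℝ × ℝ → ℝ := fun q =>
    Set.indicator {q : ℝ × ℝ | 0 < q.2 ∧ q.2 ≤ q.1} (fun q => f q.2 / Real.sqrt (q.1 - q.2)) q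
    with hFdef
  have hFm : Measurable F := by
    apply Measurable.indicator
    · exact (hf.measurable.comp measurable_snd).div
        ((Real.continuous_sqrt.measurable).comp (measurable_fst.sub measurable_snd))
    · exact MeasurableSet.inter (measurableSet_lt measurable_const measurable_snd)
        (measurableSet_le measurable_snd measurable_fst)
  have key := hFm.stronglyMeasurable.integral_prod_right' (ν := volume)
  have : (fun t : ℝ => ∫ s, F (t, s)) =
      fun t : ℝ => ∫ s in Set.Ioc (0:ℝ) t, f s / Real.sqrt (t - s) := by
    funext t
    rw [← MeasureTheory.integral_indicator measurableSet_Ioc]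
    refine MeasureTheory.integral_congr_ae (Filter.Eventually.of_forall fun s => ?_)
    show F (t, s) = _
    rw [hFdef]
    by_cases h : s ∈ Set.Ioc (0:ℝ) t
    · have hm : (t, s) ∈ {q : ℝ × ℝ | 0 < q.2 ∧ q.2 ≤ q.1} := ⟨h.1, h.2⟩
      simp only [Set.indicator_of_mem hm]; rw [Set.indicator_of_mem h]
    · have hm : (t, s) ∉ {q : ℝ × ℝ | 0 < q.2 ∧ q.2 ≤ q.1} := fun hc => h ⟨hc.1, hc.2⟩
      simp only [Set.indicator_of_notMem hm]; rw [Set.indicator_of_notMem h]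
  rwa [this] at key

lemma I_div_integrableOn {f : ℝ → ℝ} (hf : Continuous f) (hfnn : ∀ s, 0 ≤ f s)
    {x : ℝ} (hx : 0 < x) :
    IntegrableOn (fun t => (∫ s in (0:ℝ)..t, f s / Real.sqrt (t - s)) / Real.sqrt (x - t))
      (Set.Ioo 0 x) volume := by
  obtain ⟨B, hB⟩ := (isCompact_Icc : IsCompact (Set.Icc (0:ℝ) x)).exists_bound_of_continuousOn
    hf.continuousOn
  have hBnn : 0 ≤ B := le_trans (norm_nonneg _) (hB 0 ⟨le_refl 0, hx.le⟩)
  have hBf : ∀ s ∈ Set.Icc (0:ℝ) x, f s ≤ B := fun s hs =>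
    le_trans (le_abs_self _) (by simpa [Real.norm_eq_abs] using hB s hs)
  have hmeas : AEStronglyMeasurable
      (fun t => (∫ s in (0:ℝ)..t, f s / Real.sqrt (t - s)) / Real.sqrt (x - t))
      (volume.restrict (Set.Ioo 0 x)) := by
    have h1 : AEStronglyMeasurable
        (fun t => (∫ s in Set.Ioc (0:ℝ) t, f s / Real.sqrt (t - s)) / Real.sqrt (x - t))
        (volume.restrict (Set.Ioo 0 x)) :=
      ((J_meas hf).measurable.div
        ((Real.continuous_sqrt.comp (continuous_const.sub continuous_id)).measurable)).aestronglyMeasurable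
    apply h1.congr
    rw [Filter.EventuallyEq, ae_restrict_iff' measurableSet_Ioo]
    filter_upwards with t ht
    rw [intervalIntegral.integral_of_le ht.1.le]
  have hg : IntegrableOn (fun t => (B * (2 * Real.sqrt x)) * (1 / Real.sqrt (x - t)))
      (Set.Ioo 0 x) volume :=
    (((sqrt_int' 0 x hx.le).const_mul _).1).mono_set Set.Ioo_subset_Ioc_self
  apply hg.mono' hmeas
  rw [ae_restrict_iff' measurableSet_Ioo]
  filter_upwards with t ht
  have h0t : (0:ℝ) ≤ t := ht.1.le
  have hInn := inner_nonneg hfnn t h0t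
  have hIle : ∫ s in (0:ℝ)..t, f s / Real.sqrt (t - s) ≤ B * (2 * Real.sqrt x) := by
    calc _ ≤ B * (2 * Real.sqrt t) := inner_le hf h0t
          (fun s hs => hBf s ⟨hs.1, le_trans hs.2 ht.2.le⟩)
      _ ≤ B * (2 * Real.sqrt x) := by
          apply mul_le_mul_of_nonneg_left _ hBnn
          exact mul_le_mul_of_nonneg_left (Real.sqrt_le_sqrt ht.2.le) (by norm_num)
  rw [Real.norm_eq_abs, abs_of_nonneg (by positivity), mul_one_div]
  exact my_div_le_div _ _ _ hIle (Real.sqrt_nonneg _)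

lemma tonelli_step {f : ℝ → ℝ} (hf : Continuous f) (hfnn : ∀ s, 0 ≤ f s)
    {x : ℝ} (hx : 0 < x) :
    (∫ t in (0:ℝ)..x, (∫ s in (0:ℝ)..t, f s / Real.sqrt (t - s)) / Real.sqrt (x - t))
      = Real.pi * ∫ s in (0:ℝ)..x, f s := by
  set I : ℝ → ℝ := fun t => ∫ s in (0:ℝ)..t, f s / Real.sqrt (t - s) with hI
  set G : ℝ → ℝ → ℝ≥0∞ := fun t s =>
    ENNReal.ofReal (f s / (Real.sqrt (t - s) * Real.sqrt (x - t))) with hG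
  have hKmeas : Measurable (fun p : ℝ × ℝ => f p.2 / (Real.sqrt (p.1 - p.2) * Real.sqrt (x - p.1))) := by
    apply (hf.measurable.comp measurable_snd).div
    exact ((Real.continuous_sqrt.measurable.comp (measurable_fst.sub measurable_snd)).mul
      (Real.continuous_sqrt.measurable.comp (measurable_const.sub measurable_fst)))
  -- Claim L
  have hL : ENNReal.ofReal (∫ t in (0:ℝ)..x, I t / Real.sqrt (x - t))
      = ∫⁻ t in Set.Ioo (0:ℝ) x, ∫⁻ s in Set.Ioo (0:ℝ) x, G t s := by
    rw [intervalIntegral.integral_of_le hx.le, MeasureTheory.integral_Ioc_eq_integral_Ioo]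
    rw [MeasureTheory.ofReal_integral_eq_lintegral_ofReal
      (I_div_integrableOn hf hfnn hx)
      ((ae_restrict_iff' measurableSet_Ioo).2 (Filter.Eventually.of_forall fun t ht =>
        div_nonneg (inner_nonneg hfnn t ht.1.le) (Real.sqrt_nonneg _)))]
    apply setLIntegral_congr_fun measurableSet_Ioo
    intro t ht
    have hIof : ENNReal.ofReal (I t)
        = ∫⁻ s in Set.Ioc (0:ℝ) t, ENNReal.ofReal (f s / Real.sqrt (t - s)) := by
      rw [hI]
      simp only
      rw [intervalIntegral.integral_of_le ht.1.le]
      exact MeasureTheory.ofReal_integral_eq_lintegral_ofReal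
        ((div_sqrt_integrable hf 0 t ht.1.le).1)
        (Filter.Eventually.of_forall fun s => div_nonneg (hfnn s) (Real.sqrt_nonneg _))
    have step1 : ENNReal.ofReal (I t / Real.sqrt (x - t))
        = ∫⁻ s in Set.Ioc (0:ℝ) t, G t s := by
      rw [div_eq_mul_inv, mul_comm, ENNReal.ofReal_mul (by positivity), hIof,
        ← MeasureTheory.lintegral_const_mul' _ _ ENNReal.ofReal_ne_top]
      apply setLIntegral_congr_fun measurableSet_Ioc
      intro s _
      rw [hG]
      simp only
      rw [← ENNReal.ofReal_mul (by positivity)]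
      congr 1
      rw [← div_div, div_eq_mul_inv _ (Real.sqrt (x - t)), mul_comm]
    have hsplit : Set.Ioo (0:ℝ) x = Set.Ioc 0 t ∪ Set.Ioo t x :=
      (Set.Ioc_union_Ioo_eq_Ioo ht.1.le ht.2).symm
    have hdisj : Disjoint (Set.Ioc (0:ℝ) t) (Set.Ioo t x) :=
      Set.disjoint_left.2 fun s hs hs' => absurd (lt_of_le_of_lt hs.2 hs'.1) (lt_irrefl s)
    have hzero : ∫⁻ s in Set.Ioo t x, G t s = 0 := by
      rw [setLIntegral_congr_fun measurableSet_Ioo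
        (fun s (hs : s ∈ Set.Ioo t x) => show G t s = 0 by
          rw [hG]; simp only
          rw [Real.sqrt_eq_zero_of_nonpos (by linarith [hs.1]), zero_mul, div_zero,
            ENNReal.ofReal_zero])]
      simp
    show ENNReal.ofReal (I t / Real.sqrt (x - t)) = ∫⁻ s in Set.Ioo (0:ℝ) x, G t s
    rw [step1, hsplit, lintegral_union measurableSet_Ioo hdisj, hzero, add_zero]
  -- Claim R
  have hswap : ∫⁻ t in Set.Ioo (0:ℝ) x, ∫⁻ s in Set.Ioo (0:ℝ) x, G t s
      = ∫⁻ s in Set.Ioo (0:ℝ) x, ∫⁻ t in Set.Ioo (0:ℝ) x, G t s := by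
    apply MeasureTheory.lintegral_lintegral_swap
    exact (ENNReal.measurable_ofReal.comp hKmeas).aemeasurable
  have hR : ENNReal.ofReal (Real.pi * ∫ s in (0:ℝ)..x, f s)
      = ∫⁻ s in Set.Ioo (0:ℝ) x, ∫⁻ t in Set.Ioo (0:ℝ) x, G t s := by
    have hinner : ∀ s ∈ Set.Ioo (0:ℝ) x,
        ∫⁻ t in Set.Ioo (0:ℝ) x, G t s = ENNReal.ofReal (Real.pi * f s) := by
      intro s hs
      have hsplit : Set.Ioo (0:ℝ) x = Set.Ioc 0 s ∪ Set.Ioo s x :=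
        (Set.Ioc_union_Ioo_eq_Ioo hs.1.le hs.2).symm
      have hdisj : Disjoint (Set.Ioc (0:ℝ) s) (Set.Ioo s x) :=
        Set.disjoint_left.2 fun u hu hu' => absurd (lt_of_le_of_lt hu.2 hu'.1) (lt_irrefl u)
      have hzero : ∫⁻ t in Set.Ioc (0:ℝ) s, G t s = 0 := by
        rw [setLIntegral_congr_fun measurableSet_Ioc
          (fun t (ht : t ∈ Set.Ioc 0 s) => show G t s = 0 by
            rw [hG]; simp only
            rw [Real.sqrt_eq_zero_of_nonpos (by linarith [ht.2]), zero_mul, div_zero,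
              ENNReal.ofReal_zero])]
        simp
      have hbeta : ∫⁻ t in Set.Ioo s x, ENNReal.ofReal
          (1 / (Real.sqrt (t - s) * Real.sqrt (x - t))) = ENNReal.ofReal Real.pi := by
        rw [← MeasureTheory.ofReal_integral_eq_lintegral_ofReal
          (((beta_integrable s x hs.2).1).mono_set Set.Ioo_subset_Ioc_self)
          (Filter.Eventually.of_forall fun t => by positivity)]
        rw [← MeasureTheory.integral_Ioc_eq_integral_Ioo,
          ← intervalIntegral.integral_of_le hs.2.le, beta_eq s x hs.2]
      have hmain : ∫⁻ t in Set.Ioo s x, G t s = ENNReal.ofReal (Real.pi * f s) := by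
        have : ∀ t, G t s = ENNReal.ofReal (f s)
            * ENNReal.ofReal (1 / (Real.sqrt (t - s) * Real.sqrt (x - t))) := by
          intro t
          rw [hG]; simp only
          rw [← ENNReal.ofReal_mul (hfnn s), mul_one_div]
        simp only [this]
        rw [MeasureTheory.lintegral_const_mul' _ _ ENNReal.ofReal_ne_top, hbeta,
          ← ENNReal.ofReal_mul (hfnn s), mul_comm]
      rw [hsplit, lintegral_union measurableSet_Ioo hdisj, hzero, zero_add, hmain]
    rw [setLIntegral_congr_fun measurableSet_Ioo hinner]
    rw [← MeasureTheory.ofReal_integral_eq_lintegral_ofReal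
      (f := fun s => Real.pi * f s) (((continuous_const.mul hf).intervalIntegrable 0 x).1.mono_set Set.Ioo_subset_Ioc_self)
      (Filter.Eventually.of_forall fun s => mul_nonneg Real.pi_pos.le (hfnn s))]
    rw [MeasureTheory.integral_const_mul, ← MeasureTheory.integral_Ioc_eq_integral_Ioo,
      ← intervalIntegral.integral_of_le hx.le]
  have hLnn : 0 ≤ ∫ t in (0:ℝ)..x, I t / Real.sqrt (x - t) :=
    intervalIntegral.integral_nonneg hx.le fun t ht =>
      div_nonneg (inner_nonneg hfnn t ht.1) (Real.sqrt_nonneg _)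
  have hRnn : 0 ≤ Real.pi * ∫ s in (0:ℝ)..x, f s :=
    mul_nonneg Real.pi_pos.le (intervalIntegral.integral_nonneg hx.le fun s _ => hfnn s)
  exact (ENNReal.ofReal_eq_ofReal_iff hLnn hRnn).1 (hL.trans (hswap.trans hR.symm))

lemma iterate_step {f : ℝ → ℝ} (hf : Continuous f) (hfnn : ∀ s, 0 ≤ f s)
    {a M C : ℝ} (hM : 0 ≤ M) (hC : 0 ≤ C)
    (hineq : ∀ x, 0 < x → x ≤ a →
      f x ≤ M / Real.sqrt x + C * ∫ t in (0:ℝ)..x, f t / Real.sqrt (x - t)) :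
    ∀ x, 0 < x → x ≤ a →
      f x ≤ M / Real.sqrt x + Real.pi * C * M
        + Real.pi * C ^ 2 * ∫ s in (0:ℝ)..x, f s := by
  intro x hx hxa
  set I : ℝ → ℝ := fun t => ∫ s in (0:ℝ)..t, f s / Real.sqrt (t - s) with hIdef
  set g : ℝ → ℝ := fun t =>
    M * (1 / (Real.sqrt t * Real.sqrt (x - t))) + C * (I t / Real.sqrt (x - t)) with hgdef
  have hbeta0 : IntervalIntegrable (fun t => 1 / (Real.sqrt t * Real.sqrt (x - t))) volume 0 x := by
    have := beta_integrable 0 x hx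
    simpa [sub_zero] using this
  have hbeta0val : ∫ t in (0:ℝ)..x, 1 / (Real.sqrt t * Real.sqrt (x - t)) = Real.pi := by
    have := beta_eq 0 x hx
    simpa [sub_zero] using this
  have hg2 : IntervalIntegrable (fun t => I t / Real.sqrt (x - t)) volume 0 x := by
    rw [intervalIntegrable_iff_integrableOn_Ioc_of_le hx.le]
    exact (I_div_integrableOn hf hfnn hx).congr_set_ae MeasureTheory.Ioo_ae_eq_Ioc.symm
  have hgint : IntervalIntegrable g volume 0 x :=
    (hbeta0.const_mul M).add (hg2.const_mul C)
  have hlint : IntervalIntegrable (fun t => f t / Real.sqrt (x - t)) volume 0 x :=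
    div_sqrt_integrable hf 0 x hx.le
  have hae : (fun t => f t / Real.sqrt (x - t)) ≤ᵐ[volume.restrict (Set.Icc 0 x)] g := by
    have h0 : ∀ᵐ (t : ℝ) ∂volume, t ≠ 0 := by
      have hs : volume ({(0:ℝ)} : Set ℝ) = 0 := measure_singleton _
      rw [ae_iff]
      simp [not_not, Set.setOf_eq_eq_singleton, hs]
    filter_upwards [ae_restrict_of_ae h0, ae_restrict_mem measurableSet_Icc] with t ht htmem
    have ht0 : 0 < t := lt_of_le_of_ne htmem.1 (Ne.symm ht)
    have hfle : f t ≤ M / Real.sqrt t + C * I t := hineq t ht0 (le_trans htmem.2 hxa)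
    calc f t / Real.sqrt (x - t) ≤ (M / Real.sqrt t + C * I t) / Real.sqrt (x - t) :=
          my_div_le_div _ _ _ hfle (Real.sqrt_nonneg _)
      _ = g t := by
          rw [hgdef]
          simp only
          rw [add_div, div_div, mul_div_assoc, mul_one_div]
  have hJle : (∫ t in (0:ℝ)..x, f t / Real.sqrt (x - t)) ≤ ∫ t in (0:ℝ)..x, g t :=
    intervalIntegral.integral_mono_ae_restrict hx.le hlint hgint hae
  have hgval : ∫ t in (0:ℝ)..x, g t
      = M * Real.pi + C * (Real.pi * ∫ s in (0:ℝ)..x, f s) := by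
    rw [hgdef]
    simp only
    rw [intervalIntegral.integral_add (hbeta0.const_mul M) (hg2.const_mul C),
      intervalIntegral.integral_const_mul, intervalIntegral.integral_const_mul,
      hbeta0val, tonelli_step hf hfnn hx]
  have := hineq x hx hxa
  have hCle : C * (∫ t in (0:ℝ)..x, f t / Real.sqrt (x - t))
      ≤ C * (M * Real.pi + C * (Real.pi * ∫ s in (0:ℝ)..x, f s)) :=
    mul_le_mul_of_nonneg_left (le_trans hJle (le_of_eq hgval)) hC
  calc f x ≤ M / Real.sqrt x + C * ∫ t in (0:ℝ)..x, f t / Real.sqrt (x - t) := this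
    _ ≤ M / Real.sqrt x + C * (M * Real.pi + C * (Real.pi * ∫ s in (0:ℝ)..x, f s)) := by
        linarith
    _ = M / Real.sqrt x + Real.pi * C * M + Real.pi * C ^ 2 * ∫ s in (0:ℝ)..x, f s := by
        ring

lemma gronwall_final {f : ℝ → ℝ} (hf : Continuous f) {a M C : ℝ} (hM : 0 ≤ M) (hC : 0 ≤ C)
    (hE : ∀ x, 0 < x → x ≤ a →
      f x ≤ M / Real.sqrt x + Real.pi * C * M
        + Real.pi * C ^ 2 * ∫ s in (0:ℝ)..x, f s) :
    ∀ x, 0 < x → x ≤ a →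
      f x ≤ M * (1 / Real.sqrt x + Real.pi * C) *
        (2 * Real.pi * C ^ 2 * x * Real.exp (Real.pi * C ^ 2 * x) + 1) := by
  intro x hx hxa
  set K : ℝ := Real.pi * C ^ 2 with hKdef
  have hK : 0 ≤ K := by positivity
  set F : ℝ → ℝ := fun y => ∫ s in (0:ℝ)..y, f s with hFdef
  have hF : ∀ s, HasDerivAt F (f s) s := fun s =>
    intervalIntegral.integral_hasDerivAt_right (hf.intervalIntegrable 0 s)
      (hf.stronglyMeasurable.stronglyMeasurableAtFilter) hf.continuousAt
  have hFc : Continuous F := Differentiable.continuous (fun s => (hF s).differentiableAt)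
  set W : ℝ → ℝ := fun s =>
    M * (2 * Real.sqrt s + Real.pi * C * s) - Real.exp (-(K * s)) * F s with hWdef
  have hW0 : W 0 = 0 := by
    simp [hWdef, hFdef, Real.sqrt_zero, intervalIntegral.integral_same]
  have hWC : Continuous W := by
    apply Continuous.sub
    · exact continuous_const.mul ((continuous_const.mul Real.continuous_sqrt).add
        (continuous_const.mul continuous_id))
    · exact (Real.continuous_exp.comp (continuous_const.mul continuous_id).neg).mul hFc
  have hWd : ∀ s ∈ Set.Ioo (0:ℝ) x, HasDerivAt W
      (M * (1 / Real.sqrt s + Real.pi * C) - Real.exp (-(K * s)) * (f s - K * F s)) s := by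
    intro s hs
    have hs0 : (0:ℝ) < s := hs.1
    have hsq : Real.sqrt s ≠ 0 := ne_of_gt (Real.sqrt_pos.2 hs0)
    have hsqrt : HasDerivAt Real.sqrt (1 / (2 * Real.sqrt s)) s :=
      Real.hasDerivAt_sqrt (ne_of_gt hs0)
    have hpart1 : HasDerivAt (fun s => M * (2 * Real.sqrt s + Real.pi * C * s))
        (M * (2 * (1 / (2 * Real.sqrt s)) + Real.pi * C * 1)) s :=
      ((hsqrt.const_mul 2).add ((hasDerivAt_id s).const_mul (Real.pi * C))).const_mul M
    have hinner : HasDerivAt (fun s : ℝ => -(K * s)) (-(K * 1)) s :=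
      (((hasDerivAt_id s).const_mul K)).neg
    have hexp : HasDerivAt (fun s : ℝ => Real.exp (-(K * s)))
        (Real.exp (-(K * s)) * -(K * 1)) s :=
      hinner.exp
    have hprod := hexp.mul (hF s)
    have := hpart1.sub hprod
    refine this.congr_deriv ?_
    have h2 : Real.sqrt s * Real.sqrt s = s := Real.mul_self_sqrt hs0.le
    field_simp
    ring
  have hWd_nonneg : ∀ s ∈ Set.Ioo (0:ℝ) x,
      0 ≤ M * (1 / Real.sqrt s + Real.pi * C) - Real.exp (-(K * s)) * (f s - K * F s) := by
    intro s hs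
    have hA : (0:ℝ) ≤ M * (1 / Real.sqrt s + Real.pi * C) := by positivity
    have hv : f s - K * F s ≤ M * (1 / Real.sqrt s + Real.pi * C) := by
      have := hE s hs.1 (le_trans hs.2.le hxa)
      have heq : M * (1 / Real.sqrt s + Real.pi * C)
          = M / Real.sqrt s + Real.pi * C * M := by rw [mul_add, mul_one_div]; ring
      rw [heq]; linarith
    have hexp1 : Real.exp (-(K * s)) ≤ 1 :=
      Real.exp_le_one_iff.2 (by nlinarith [hs.1])
    rcases le_or_gt (f s - K * F s) 0 with hv0 | hv0
    · have : Real.exp (-(K * s)) * (f s - K * F s) ≤ 0 :=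
        mul_nonpos_of_nonneg_of_nonpos (Real.exp_pos _).le hv0
      linarith
    · have : Real.exp (-(K * s)) * (f s - K * F s) ≤ f s - K * F s :=
        mul_le_of_le_one_left hv0.le hexp1
      linarith
  have hmono : MonotoneOn W (Set.Icc 0 x) := by
    apply monotoneOn_of_deriv_nonneg (convex_Icc 0 x) hWC.continuousOn
    · rw [interior_Icc]
      exact fun s hs => (hWd s hs).differentiableAt.differentiableWithinAt
    · rw [interior_Icc]
      intro s hs
      rw [(hWd s hs).deriv]
      exact hWd_nonneg s hs
  have hWx : 0 ≤ W x := hW0 ▸ hmono ⟨le_refl 0, hx.le⟩ ⟨hx.le, le_refl x⟩ hx.le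
  have hFx : F x ≤ Real.exp (K * x) * (M * (2 * Real.sqrt x + Real.pi * C * x)) := by
    have h1 : Real.exp (-(K * x)) * F x ≤ M * (2 * Real.sqrt x + Real.pi * C * x) := by
      rw [hWdef] at hWx; simp only at hWx; linarith
    have h2 := mul_le_mul_of_nonneg_left h1 (Real.exp_pos (K * x)).le
    calc F x = Real.exp (K * x) * (Real.exp (-(K * x)) * F x) := by
          rw [← mul_assoc, ← Real.exp_add]; simp
      _ ≤ _ := h2
  have hfx := hE x hx hxa
  have hsqx : Real.sqrt x * Real.sqrt x = x := Real.mul_self_sqrt hx.le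
  have hsx : 0 < Real.sqrt x := Real.sqrt_pos.2 hx
  have he : (1:ℝ) ≤ Real.exp (K * x) := Real.one_le_exp (by positivity)
  have key : K * F x ≤ 2 * K * x * Real.exp (K * x) * (M * (1 / Real.sqrt x + Real.pi * C)) := by
    have h3 : K * F x ≤ K * (Real.exp (K * x) * (M * (2 * Real.sqrt x + Real.pi * C * x))) :=
      mul_le_mul_of_nonneg_left hFx hK
    have h4 : x * (1 / Real.sqrt x) = Real.sqrt x := by
      rw [mul_one_div]
      exact Real.div_sqrt
    nlinarith [mul_nonneg (mul_nonneg hK (Real.exp_pos (K*x)).le) hM,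
      mul_nonneg (mul_nonneg (mul_nonneg hK hx.le) (Real.exp_pos (K*x)).le)
        (mul_nonneg hM (mul_nonneg Real.pi_pos.le hC))]
  have heq2 : M * (1 / Real.sqrt x + Real.pi * C) = M / Real.sqrt x + Real.pi * C * M := by
    rw [mul_add, mul_one_div]; ring
  calc f x ≤ M / Real.sqrt x + Real.pi * C * M + K * F x := hfx
    _ ≤ M / Real.sqrt x + Real.pi * C * M
        + 2 * K * x * Real.exp (K * x) * (M * (1 / Real.sqrt x + Real.pi * C)) := by linarith
    _ = M * (1 / Real.sqrt x + Real.pi * C) * (2 * K * x * Real.exp (K * x) + 1) := by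
        rw [← heq2]; ring
    _ = M * (1 / Real.sqrt x + Real.pi * C) *
        (2 * Real.pi * C ^ 2 * x * Real.exp (Real.pi * C ^ 2 * x) + 1) := by
        rw [hKdef]; ring

end SingularGronwallAux

/-- Gronwall-type inequality for a weakly singular kernel: if a continuous
nonnegative function `f` on `[0,a]` satisfies
`f x ≤ M/√x + C ∫₀ˣ f t / √(x−t) dt` for `0 < x ≤ a`, then
`f x ≤ M (1/√x + πC)(2πC²x e^{πC²x} + 1)`. -/
theorem singular_gronwall (a M C : ℝ) (ha : 0 < a) (hM : 0 ≤ M) (hC : 0 ≤ C)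
    (f : ℝ → ℝ) (hf : ContinuousOn f (Set.Icc 0 a))
    (hfnn : ∀ x ∈ Set.Icc (0:ℝ) a, 0 ≤ f x)
    (hineq : ∀ x, 0 < x → x ≤ a →
      f x ≤ M / Real.sqrt x + C * ∫ t in (0:ℝ)..x, f t / Real.sqrt (x - t)) :
    ∀ x, 0 < x → x ≤ a →
      f x ≤ M * (1 / Real.sqrt x + Real.pi * C) *
        (2 * Real.pi * C ^ 2 * x * Real.exp (Real.pi * C ^ 2 * x) + 1) := by
  set clamp : ℝ → ℝ := fun y => max 0 (min y a) with hclamp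
  have hclamp_mem : ∀ y, clamp y ∈ Set.Icc (0:ℝ) a := fun y =>
    ⟨le_max_left _ _, max_le ha.le (min_le_right _ _)⟩
  have hclamp_cont : Continuous clamp :=
    continuous_const.max (continuous_id.min continuous_const)
  set g : ℝ → ℝ := fun y => f (clamp y) with hg
  have hgc : Continuous g := hf.comp_continuous hclamp_cont hclamp_mem
  have hgnn : ∀ y, 0 ≤ g y := fun y => hfnn _ (hclamp_mem y)
  have hgeq : ∀ y ∈ Set.Icc (0:ℝ) a, g y = f y := by
    intro y hy
    rw [hg, hclamp]
    simp only
    rw [min_eq_left hy.2, max_eq_right hy.1]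
  have hgineq : ∀ x, 0 < x → x ≤ a →
      g x ≤ M / Real.sqrt x + C * ∫ t in (0:ℝ)..x, g t / Real.sqrt (x - t) := by
    intro x hx hxa
    rw [hgeq x ⟨hx.le, hxa⟩]
    have : (∫ t in (0:ℝ)..x, g t / Real.sqrt (x - t))
        = ∫ t in (0:ℝ)..x, f t / Real.sqrt (x - t) := by
      apply intervalIntegral.integral_congr
      intro t ht
      rw [Set.uIcc_of_le hx.le] at ht
      show g t / Real.sqrt (x - t) = f t / Real.sqrt (x - t)
      rw [hgeq t ⟨ht.1, le_trans ht.2 hxa⟩]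
    rw [this]
    exact hineq x hx hxa
  intro x hx hxa
  have := gronwall_final hgc hM hC (iterate_step hgc hgnn hM hC hgineq) x hx hxa
  rwa [hgeq x ⟨hx.le, hxa⟩] at this
end

section
/- Let Γ ∈ C¹([0,∞)) and define the running supremum Γ̃(σ) = sup_{0 ≤ τ ≤ σ} Γ(τ). Then there is an at most countable set D ⊂ [0,∞) such that Γ̃ is continuously differentiable on [0,∞) \ D; moreover for every σ ∈ D, Γ̃ admits a left derivative equal to 0 and a right derivative equal to Γ'(σ), with 0 = Γ̃'₋(σ) < Γ̃'₊(σ) = Γ'(σ). -/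
open MeasureTheory Real

/-- The running supremum `Γ̃(σ) = sup_{0 ≤ τ ≤ σ} Γ(τ)`. -/
noncomputable def runSup (Γ : ℝ → ℝ) (σ : ℝ) : ℝ := sSup (Γ '' Set.Icc 0 σ)

namespace RunSupAux

open Set Filter

variable {Γ : ℝ → ℝ}

lemma runSup_bdd (hc : ContinuousOn Γ (Set.Ici 0)) {a b : ℝ} (ha : 0 ≤ a) :
    BddAbove (Γ '' Set.Icc a b) :=
  ((isCompact_Icc.image_of_continuousOn (hc.mono (Set.Icc_subset_Ici_self.trans
    (Set.Ici_subset_Ici.2 ha))))).bddAbove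

lemma le_runSup (hc : ContinuousOn Γ (Set.Ici 0)) {τ σ : ℝ} (h : τ ∈ Set.Icc 0 σ) :
    Γ τ ≤ runSup Γ σ :=
  le_csSup (runSup_bdd hc le_rfl) (Set.mem_image_of_mem _ h)

lemma runSup_mono (hc : ContinuousOn Γ (Set.Ici 0)) {a b : ℝ} (ha : 0 ≤ a) (hab : a ≤ b) :
    runSup Γ a ≤ runSup Γ b :=
  csSup_le_csSup (runSup_bdd hc le_rfl) ⟨Γ 0, Set.mem_image_of_mem _ ⟨le_rfl, ha⟩⟩
    (Set.image_mono (Set.Icc_subset_Icc_right hab))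

lemma runSup_zero : runSup Γ 0 = Γ 0 := by simp [runSup, Set.Icc_self]

lemma runSup_max (hc : ContinuousOn Γ (Set.Ici 0)) {a b : ℝ} (ha : 0 ≤ a) (hab : a ≤ b) :
    runSup Γ b = max (runSup Γ a) (sSup (Γ '' Set.Icc a b)) := by
  rw [runSup, ← Set.Icc_union_Icc_eq_Icc ha hab, Set.image_union]
  exact csSup_union (runSup_bdd hc le_rfl) (⟨Γ 0, Set.mem_image_of_mem _ ⟨le_rfl, ha⟩⟩)
    (runSup_bdd hc ha) ⟨Γ a, Set.mem_image_of_mem _ ⟨le_rfl, hab⟩⟩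

lemma sSup_image_mono {a b : ℝ} (hab : a ≤ b) (hm : MonotoneOn Γ (Set.Icc a b)) :
    sSup (Γ '' Set.Icc a b) = Γ b := by
  apply IsGreatest.csSup_eq
  refine ⟨Set.mem_image_of_mem _ ⟨hab, le_rfl⟩, ?_⟩
  rintro y ⟨x, hx, rfl⟩
  exact hm hx ⟨hab, le_rfl⟩ hx.2

lemma sSup_image_attained (hc : ContinuousOn Γ (Set.Ici 0)) {a b : ℝ} (ha : 0 ≤ a) (hab : a ≤ b) :
    ∃ ξ ∈ Set.Icc a b, sSup (Γ '' Set.Icc a b) = Γ ξ := by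
  obtain ⟨ξ, hξ, hmax⟩ := isCompact_Icc.exists_isMaxOn (Set.nonempty_Icc.2 hab)
    (hc.mono (Set.Icc_subset_Ici_self.trans (Set.Ici_subset_Ici.2 ha)))
  refine ⟨ξ, hξ, IsGreatest.csSup_eq ⟨Set.mem_image_of_mem _ hξ, ?_⟩⟩
  rintro y ⟨x, hx, rfl⟩
  exact hmax hx

lemma exists_right_gt {σ b d : ℝ} (hσ : 0 ≤ σ) (hσb : σ < b)
    (hd : HasDerivWithinAt Γ d (Set.Ici 0) σ) (hd0 : 0 < d) :
    ∃ τ ∈ Set.Ioc σ b, Γ σ < Γ τ := by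
  have ht : Filter.Tendsto (slope Γ σ) (nhdsWithin σ (Set.Ici 0 \ {σ})) (nhds d) :=
    hasDerivWithinAt_iff_tendsto_slope.1 hd
  have hev : ∀ᶠ τ in nhdsWithin σ (Set.Ici 0 \ {σ}), 0 < slope Γ σ τ :=
    ht.eventually (eventually_gt_nhds hd0)
  have hsub : Set.Ioc σ b ⊆ Set.Ici 0 \ {σ} := fun x hx =>
    ⟨le_trans hσ hx.1.le, by rintro rfl; exact absurd hx.1 (lt_irrefl _)⟩
  have hle : nhdsWithin σ (Set.Ioc σ b) ≤ nhdsWithin σ (Set.Ici 0 \ {σ}) :=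
    nhdsWithin_mono _ hsub
  have hne : (nhdsWithin σ (Set.Ioc σ b)).NeBot := by
    rw [nhdsWithin_Ioc_eq_nhdsGT hσb]; infer_instance
  obtain ⟨τ, hτ, hs⟩ := ((hev.filter_mono hle).and eventually_mem_nhdsWithin).exists
  refine ⟨τ, hs, ?_⟩
  have h1 : 0 < τ - σ := sub_pos.2 hs.1
  have := mul_pos hτ h1
  rw [slope_def_field] at this
  have : 0 < Γ τ - Γ σ := by
    rwa [div_mul_cancel₀] at this
    exact h1.ne'
  linarith

lemma exists_left_gt {σ d : ℝ} (hσ : 0 < σ)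
    (hd : HasDerivWithinAt Γ d (Set.Ici 0) σ) (hd0 : d < 0) :
    ∃ τ ∈ Set.Ico 0 σ, Γ σ < Γ τ := by
  have ht : Filter.Tendsto (slope Γ σ) (nhdsWithin σ (Set.Ici 0 \ {σ})) (nhds d) :=
    hasDerivWithinAt_iff_tendsto_slope.1 hd
  have hev : ∀ᶠ τ in nhdsWithin σ (Set.Ici 0 \ {σ}), slope Γ σ τ < 0 :=
    ht.eventually (eventually_lt_nhds hd0)
  have hsub : Set.Ico 0 σ ⊆ Set.Ici 0 \ {σ} := fun x hx =>
    ⟨hx.1, by rintro rfl; exact absurd hx.2 (lt_irrefl _)⟩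
  have hle : nhdsWithin σ (Set.Ico 0 σ) ≤ nhdsWithin σ (Set.Ici 0 \ {σ}) :=
    nhdsWithin_mono _ hsub
  have hne : (nhdsWithin σ (Set.Ico 0 σ)).NeBot := by
    rw [nhdsWithin_Ico_eq_nhdsLT hσ]; infer_instance
  obtain ⟨τ, hτ, hs⟩ := ((hev.filter_mono hle).and eventually_mem_nhdsWithin).exists
  refine ⟨τ, hs, ?_⟩
  have h1 : τ - σ < 0 := sub_neg.2 hs.2
  have := mul_pos_of_neg_of_neg hτ h1
  rw [slope_def_field] at this
  have : 0 < Γ τ - Γ σ := by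
    rwa [div_mul_cancel₀] at this
    exact h1.ne
  linarith

/-- Local structure near a point where `derivWithin Γ (Ici 0)` is positive. -/
lemma loc_struct (hΓ : ContDiffOn ℝ 1 Γ (Set.Ici 0)) {σ : ℝ} (hσ : 0 ≤ σ)
    (hdpos : 0 < derivWithin Γ (Set.Ici 0) σ) :
    ∃ a b : ℝ, 0 ≤ a ∧ a ≤ σ ∧ σ < b ∧ (0 < σ → a < σ) ∧ (σ = 0 → a = 0) ∧
      StrictMonoOn Γ (Set.Icc a b) ∧
      ∀ τ ∈ Set.Icc a b, runSup Γ τ = max (runSup Γ a) (Γ τ) := by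
  have hc : ContinuousOn Γ (Set.Ici 0) := hΓ.continuousOn
  have hd : ∀ x ∈ Set.Ici (0:ℝ), HasDerivWithinAt Γ (derivWithin Γ (Set.Ici 0) x) (Set.Ici 0) x :=
    fun x hx => (hΓ.differentiableOn one_ne_zero x hx).hasDerivWithinAt
  have hdc : ContinuousOn (derivWithin Γ (Set.Ici 0)) (Set.Ici 0) :=
    hΓ.continuousOn_derivWithin (uniqueDiffOn_Ici 0) le_rfl
  have hev : ∀ᶠ x in nhdsWithin σ (Set.Ici 0), 0 < derivWithin Γ (Set.Ici 0) x :=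
    (hdc σ hσ).eventually (eventually_gt_nhds hdpos)
  obtain ⟨δ, hδ, hball⟩ := Metric.mem_nhdsWithin_iff.1 hev
  set a : ℝ := max (σ - δ/2) 0 with ha_def
  set b : ℝ := σ + δ/2 with hb_def
  have ha0 : 0 ≤ a := le_max_right _ _
  have haσ : a ≤ σ := max_le (by linarith) hσ
  have hσb : σ < b := by simp [hb_def]; linarith
  have hsub : Set.Icc a b ⊆ Metric.ball σ δ ∩ Set.Ici 0 := by
    intro x hx
    constructor
    · rw [Metric.mem_ball, Real.dist_eq, abs_sub_lt_iff]
      constructor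
      · have := hx.2; simp only [hb_def] at this; linarith
      · have : σ - δ/2 ≤ a := le_max_left _ _
        have := hx.1; linarith
    · exact le_trans ha0 hx.1
  have hsub' : Set.Icc a b ⊆ Set.Ici (0:ℝ) := fun x hx => le_trans ha0 hx.1
  have hpos : ∀ x ∈ Set.Icc a b, 0 < derivWithin Γ (Set.Ici 0) x := fun x hx => hball (hsub hx)
  have hmono : StrictMonoOn Γ (Set.Icc a b) := by
    apply strictMonoOn_of_deriv_pos (convex_Icc a b) (hc.mono hsub')
    intro x hx
    rw [interior_Icc] at hx
    have hx0 : 0 < x := lt_of_le_of_lt ha0 hx.1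
    have hxm : x ∈ Set.Icc a b := ⟨hx.1.le, hx.2.le⟩
    have hda : HasDerivAt Γ (derivWithin Γ (Set.Ici 0) x) x :=
      (hd x hx0.le).hasDerivAt (Ici_mem_nhds hx0)
    rw [hda.deriv]
    exact hpos x hxm
  refine ⟨a, b, ha0, haσ, hσb, ?_, ?_, hmono, ?_⟩
  · intro h; exact max_lt (by linarith) h
  · intro h; simp [ha_def, h]; linarith
  · intro τ hτ
    rw [runSup_max hc ha0 hτ.1]
    congr 1
    exact sSup_image_mono hτ.1 ((hmono.monotoneOn).mono (Set.Icc_subset_Icc_right hτ.2))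

/-- If `derivWithin Γ (Ici 0) σ = 0` then `runSup Γ` has derivative `0` at `σ` within `Ici 0`. -/
lemma runSup_hasDeriv_zero (hΓ : ContDiffOn ℝ 1 Γ (Set.Ici 0)) {σ : ℝ} (hσ : 0 ≤ σ)
    (hd0 : derivWithin Γ (Set.Ici 0) σ = 0) :
    HasDerivWithinAt (runSup Γ) 0 (Set.Ici 0) σ := by
  have hc : ContinuousOn Γ (Set.Ici 0) := hΓ.continuousOn
  have hd : ∀ x ∈ Set.Ici (0:ℝ), HasDerivWithinAt Γ (derivWithin Γ (Set.Ici 0) x) (Set.Ici 0) x :=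
    fun x hx => (hΓ.differentiableOn one_ne_zero x hx).hasDerivWithinAt
  have hdc : ContinuousOn (derivWithin Γ (Set.Ici 0)) (Set.Ici 0) :=
    hΓ.continuousOn_derivWithin (uniqueDiffOn_Ici 0) le_rfl
  rw [hasDerivWithinAt_iff_tendsto_slope]
  rw [Metric.tendsto_nhdsWithin_nhds]
  intro ε hε
  obtain ⟨δ, hδ, hball⟩ := Metric.continuousWithinAt_iff.1 (hdc σ hσ) (ε/2) (by linarith)
  set a : ℝ := max (σ - δ/2) 0 with ha_def
  set b : ℝ := σ + δ/2 with hb_def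
  have ha0 : 0 ≤ a := le_max_right _ _
  have haσ : a ≤ σ := max_le (by linarith) hσ
  have hσb : σ ≤ b := by simp [hb_def]; linarith
  have hJ : Set.Icc a b ⊆ Set.Ici (0:ℝ) := fun x hx => le_trans ha0 hx.1
  have hJball : ∀ x ∈ Set.Icc a b, dist x σ < δ := by
    intro x hx
    rw [Real.dist_eq, abs_sub_lt_iff]
    have h1 : σ - δ/2 ≤ a := le_max_left _ _
    constructor
    · have := hx.2; simp only [hb_def] at this; linarith
    · have := hx.1; linarith
  have hbound : ∀ x ∈ Set.Icc a b, ‖derivWithin Γ (Set.Ici 0) x‖ ≤ ε/2 := by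
    intro x hx
    have := hball (hJ hx) (hJball x hx)
    rw [hd0, dist_zero_right] at this
    exact this.le
  have hlip : ∀ x ∈ Set.Icc a b, ∀ y ∈ Set.Icc a b, ‖Γ y - Γ x‖ ≤ ε/2 * ‖y - x‖ := by
    intro x hx y hy
    exact (convex_Icc a b).norm_image_sub_le_of_norm_hasDerivWithin_le
      (fun z hz => (hd z (hJ hz)).mono hJ) hbound hx hy
  have hkey : ∀ x ∈ Set.Icc a b, ∀ y ∈ Set.Icc a b, x ≤ y →
      runSup Γ y - runSup Γ x ≤ ε/2 * (y - x) ∧ 0 ≤ runSup Γ y - runSup Γ x := by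
    intro x hx y hy hxy
    have hx0 : 0 ≤ x := hJ hx
    constructor
    · obtain ⟨ξ, hξ, hsup⟩ := sSup_image_attained hc hx0 hxy
      rw [runSup_max hc hx0 hxy, hsup]
      have h1 : Γ ξ ≤ Γ x + ε/2 * (y - x) := by
        have := hlip x hx ξ (⟨le_trans hx.1 hξ.1, le_trans hξ.2 hy.2⟩)
        rw [Real.norm_eq_abs, Real.norm_eq_abs] at this
        have h2 : |Γ ξ - Γ x| ≤ ε/2 * (y - x) := by
          refine this.trans ?_
          have : |ξ - x| ≤ y - x := by
            rw [abs_le]; constructor <;> [linarith [hξ.1, hξ.2]; linarith [hξ.2]]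
          nlinarith
        have := abs_le.1 h2
        linarith [this.2]
      have h3 : Γ x ≤ runSup Γ x := le_runSup hc ⟨hx0, le_rfl⟩
      have h4 : Γ ξ ≤ runSup Γ x + ε/2 * (y - x) := by linarith
      have h5 : max (runSup Γ x) (Γ ξ) ≤ runSup Γ x + ε/2 * (y - x) := by
        apply max_le _ h4; nlinarith
      linarith
    · linarith [runSup_mono hc hx0 hxy]
  refine ⟨δ/2, by linarith, ?_⟩
  intro x hxmem hxd
  have hx0 : (0:ℝ) ≤ x := hxmem.1
  have hxJ : x ∈ Set.Icc a b := by
    rw [Real.dist_eq, abs_sub_lt_iff] at hxd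
    constructor
    · apply max_le <;> linarith
    · simp only [hb_def]; linarith
  have hσJ : σ ∈ Set.Icc a b := ⟨haσ, hσb⟩
  have hxne : x ≠ σ := fun h => hxmem.2 h
  have hbnd : |runSup Γ x - runSup Γ σ| ≤ ε/2 * |x - σ| := by
    rcases le_total x σ with h | h
    · obtain ⟨h1, h2⟩ := hkey x hxJ σ hσJ h
      rw [abs_sub_comm, abs_of_nonneg h2, abs_sub_comm, abs_of_nonneg (by linarith)]
      linarith
    · obtain ⟨h1, h2⟩ := hkey σ hσJ x hxJ h
      rw [abs_of_nonneg h2, abs_of_nonneg (by linarith)]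
      linarith
  rw [dist_zero_right, slope_def_field, Real.norm_eq_abs, div_eq_mul_inv, abs_mul, abs_inv]
  have hxσpos : 0 < |x - σ| := abs_pos.2 (sub_ne_zero.2 hxne)
  calc |runSup Γ x - runSup Γ σ| * |x - σ|⁻¹ ≤ (ε/2 * |x - σ|) * |x - σ|⁻¹ :=
        mul_le_mul_of_nonneg_right hbnd (by positivity)
    _ = ε/2 := by field_simp
    _ < ε := by linarith

/-- If `Γ σ < runSup Γ σ` with `σ > 0`, then `runSup Γ` is constant near `σ`. -/
lemma runSup_locally_const_of_lt (hc : ContinuousOn Γ (Set.Ici 0)) {σ : ℝ} (hσ : 0 < σ)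
    (hlt : Γ σ < runSup Γ σ) :
    ∃ δ > 0, ∀ τ ∈ Set.Ioo (σ - δ) (σ + δ), runSup Γ τ = runSup Γ σ := by
  have hca : ContinuousAt Γ σ := (hc σ hσ.le).continuousAt (Ici_mem_nhds hσ)
  have hev : ∀ᶠ τ in nhds σ, Γ τ < runSup Γ σ := hca.eventually_lt continuousAt_const hlt
  obtain ⟨δ0, hδ0, hball⟩ := Metric.eventually_nhds_iff.1 hev
  refine ⟨min δ0 σ, lt_min hδ0 hσ, ?_⟩
  intro τ hτ
  have hminpos : 0 < min δ0 σ := lt_min hδ0 hσ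
  have hminσ : min δ0 σ ≤ σ := min_le_right _ _
  have hτ0 : 0 ≤ τ := by linarith [hτ.1]
  have hsm : ∀ x, |x - σ| < min δ0 σ → Γ x < runSup Γ σ := by
    intro x hx
    exact hball (by rw [Real.dist_eq]; exact lt_of_lt_of_le hx (min_le_left _ _))
  rcases le_total σ τ with h | h
  · rw [runSup_max hc hσ.le h]
    have hle : sSup (Γ '' Set.Icc σ τ) ≤ runSup Γ σ := by
      apply csSup_le (Set.Nonempty.image _ (Set.nonempty_Icc.2 h))
      rintro y ⟨x, hx, rfl⟩
      refine (hsm x ?_).le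
      rw [abs_sub_lt_iff]
      constructor
      · linarith [hx.2, hτ.2]
      · linarith [hx.1]
    exact max_eq_left hle
  · have h2 : runSup Γ σ = max (runSup Γ τ) (sSup (Γ '' Set.Icc τ σ)) := runSup_max hc hτ0 h
    obtain ⟨ξ, hξ, hsup⟩ := sSup_image_attained hc hτ0 h
    have hξlt : Γ ξ < runSup Γ σ := by
      apply hsm
      rw [abs_sub_lt_iff]
      constructor
      · linarith [hξ.2]
      · linarith [hξ.1, hτ.1]
    rw [hsup] at h2
    rcases max_choice (runSup Γ τ) (Γ ξ) with hm | hm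
    · rw [hm] at h2; exact h2.symm
    · rw [hm] at h2; exact absurd h2.symm (ne_of_lt hξlt)

/-- If `Γ` has negative derivative at `0`, then `runSup Γ` is constant `Γ 0` near `0`. -/
lemma runSup_locally_const_zero (hc : ContinuousOn Γ (Set.Ici 0)) {d : ℝ}
    (hd : HasDerivWithinAt Γ d (Set.Ici 0) 0) (hd0 : d < 0) :
    ∃ δ > 0, ∀ τ ∈ Set.Ico (0:ℝ) δ, runSup Γ τ = Γ 0 := by
  have ht : Filter.Tendsto (slope Γ 0) (nhdsWithin 0 (Set.Ici 0 \ {0})) (nhds d) :=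
    hasDerivWithinAt_iff_tendsto_slope.1 hd
  have hev : ∀ᶠ τ in nhdsWithin 0 (Set.Ici 0 \ {0}), slope Γ 0 τ < 0 :=
    ht.eventually (eventually_lt_nhds hd0)
  obtain ⟨δ, hδ, hball⟩ := Metric.mem_nhdsWithin_iff.1 hev
  refine ⟨δ, hδ, ?_⟩
  intro τ hτ
  rw [runSup_max hc le_rfl hτ.1, runSup_zero]
  have hle : sSup (Γ '' Set.Icc 0 τ) ≤ Γ 0 := by
    apply csSup_le (Set.Nonempty.image _ (Set.nonempty_Icc.2 hτ.1))
    rintro y ⟨x, hx, rfl⟩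
    rcases eq_or_lt_of_le hx.1 with h | h
    · rw [← h]
    · have hxm : x ∈ Metric.ball (0:ℝ) δ ∩ (Set.Ici 0 \ {0}) := by
        refine ⟨?_, hx.1, fun hh => absurd hh.symm (ne_of_lt h)⟩
        rw [Metric.mem_ball, Real.dist_eq, sub_zero, abs_of_nonneg hx.1]
        exact lt_of_le_of_lt hx.2 hτ.2
      have := hball hxm
      rw [Set.mem_setOf_eq, slope_def_field, sub_zero] at this
      by_contra hcon
      push_neg at hcon
      have h2 : 0 ≤ (Γ x - Γ 0) / x := div_nonneg (by linarith) h.le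
      linarith
  exact max_eq_left hle

end RunSupAux

open Set Filter RunSupAux in
/-- If `Γ ∈ C¹([0,∞))`, then the running supremum `Γ̃` is continuously
differentiable on `[0,∞)` outside an at most countable set `D`; at each
`σ ∈ D`, `Γ̃` has left derivative `0` and right derivative `Γ'(σ)`, with
`0 < Γ'(σ)`. -/
theorem runSup_contDiff_off_countable (Γ : ℝ → ℝ)
    (hΓ : ContDiffOn ℝ 1 Γ (Set.Ici 0)) :
    ∃ D : Set ℝ, D.Countable ∧ D ⊆ Set.Ici 0 ∧
      ContDiffOn ℝ 1 (runSup Γ) (Set.Ici 0 \ D) ∧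
      ∀ σ ∈ D,
        HasDerivWithinAt (runSup Γ) 0 (Set.Iic σ) σ ∧
        HasDerivWithinAt (runSup Γ) (derivWithin Γ (Set.Ici 0) σ) (Set.Ici σ) σ ∧
        0 < derivWithin Γ (Set.Ici 0) σ := by
  have hc : ContinuousOn Γ (Set.Ici 0) := hΓ.continuousOn
  have hd : ∀ x ∈ Set.Ici (0:ℝ), HasDerivWithinAt Γ (derivWithin Γ (Set.Ici 0) x) (Set.Ici 0) x :=
    fun x hx => (hΓ.differentiableOn one_ne_zero x hx).hasDerivWithinAt
  have hdc : ContinuousOn (derivWithin Γ (Set.Ici 0)) (Set.Ici 0) :=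
    hΓ.continuousOn_derivWithin (uniqueDiffOn_Ici 0) le_rfl
  set D : Set ℝ := {σ | 0 < σ ∧ Γ σ = runSup Γ σ ∧ 0 < derivWithin Γ (Set.Ici 0) σ ∧
      ∃ τ, 0 ≤ τ ∧ τ < σ ∧ runSup Γ τ = runSup Γ σ} with hD_def
  set g : ℝ → ℝ := fun τ => if Γ τ = runSup Γ τ then max (derivWithin Γ (Set.Ici 0) τ) 0 else 0
    with hg_def
  -- positivity of derivative at interior max points
  have hnonneg : ∀ σ : ℝ, 0 < σ → Γ σ = runSup Γ σ → 0 ≤ derivWithin Γ (Set.Ici 0) σ := by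
    intro σ hσ heq
    by_contra hcon
    push_neg at hcon
    obtain ⟨τ, hτ, hgt⟩ := exists_left_gt hσ (hd σ hσ.le) hcon
    have : Γ τ ≤ runSup Γ σ := le_runSup hc ⟨hτ.1, hτ.2.le⟩
    rw [← heq] at this
    linarith
  -- local identification of runSup with Γ near good points with positive derivative
  have hloc : ∀ σ : ℝ, 0 ≤ σ → σ ∉ D → Γ σ = runSup Γ σ →
      0 < derivWithin Γ (Set.Ici 0) σ →
      ∃ u ∈ nhds σ, ∀ τ ∈ u ∩ Set.Ici 0, runSup Γ τ = Γ τ := by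
    intro σ hσ0 hσD heq hdpos
    obtain ⟨a, b, ha0, haσ, hσb, hapos, hazero, hmono, hform⟩ := loc_struct hΓ hσ0 hdpos
    rcases eq_or_lt_of_le hσ0 with hσz | hσpos
    · -- σ = 0
      have ha : a = 0 := hazero hσz.symm
      refine ⟨Set.Iio b, Iio_mem_nhds (hσz ▸ hσb), ?_⟩
      intro τ hτ
      have hτm : τ ∈ Set.Icc a b := ⟨ha ▸ hτ.2, hτ.1.le⟩
      rw [hform τ hτm, ha, runSup_zero]
      have h0m : (0:ℝ) ∈ Set.Icc a b := ⟨ha.le, le_trans ha0 (haσ.trans hσb.le)⟩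
      exact max_eq_right (hmono.monotoneOn h0m hτm hτ.2)
    · -- σ > 0
      have haσ' : a < σ := hapos hσpos
      have hne : runSup Γ a < runSup Γ σ := by
        rcases eq_or_lt_of_le (runSup_mono hc ha0 haσ) with h | h
        · exfalso
          exact hσD ⟨hσpos, heq, hdpos, a, ha0, haσ', h⟩
        · exact h
      have hlt : runSup Γ a < Γ σ := by rwa [heq]
      have hca : ContinuousAt Γ σ := (hc σ hσ0).continuousAt (Ici_mem_nhds hσpos)
      have hev : ∀ᶠ τ in nhds σ, runSup Γ a < Γ τ :=
        ContinuousAt.eventually_lt continuousAt_const hca hlt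
      refine ⟨{τ | runSup Γ a < Γ τ} ∩ Set.Ioo a b, inter_mem hev (Ioo_mem_nhds haσ' hσb), ?_⟩
      intro τ hτ
      have hτm : τ ∈ Set.Icc a b := ⟨hτ.1.2.1.le, hτ.1.2.2.le⟩
      rw [hform τ hτm]
      exact max_eq_right hτ.1.1.le
  -- the derivative of runSup on the good set
  have key : ∀ σ ∈ Set.Ici 0 \ D, HasDerivWithinAt (runSup Γ) (g σ) (Set.Ici 0) σ := by
    rintro σ ⟨hσ0, hσD⟩
    by_cases hcase : Γ σ = runSup Γ σ
    · rcases lt_trichotomy (derivWithin Γ (Set.Ici 0) σ) 0 with hneg | hzero | hpos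
      · -- negative derivative: only possible at σ = 0, runSup locally constant
        have hσz : σ = 0 := by
          by_contra h
          have : 0 < σ := lt_of_le_of_ne hσ0 (Ne.symm h)
          linarith [hnonneg σ this hcase]
        subst hσz
        obtain ⟨δ, hδ, hconst⟩ := runSup_locally_const_zero hc (hd 0 Set.self_mem_Ici) hneg
        have hgv : g 0 = 0 := by
          simp only [hg_def]
          rw [if_pos hcase, max_eq_right hneg.le]
        rw [hgv]
        apply (hasDerivWithinAt_const 0 (Set.Ici (0:ℝ)) (Γ 0)).congr_of_eventuallyEq ?_
          (by rw [runSup_zero])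
        have h1 : ∀ᶠ τ in nhdsWithin 0 (Set.Ici 0), τ ∈ Set.Iio δ :=
          (eventually_mem_nhds_iff.2 (Iio_mem_nhds hδ)).filter_mono nhdsWithin_le_nhds |>.mono
            fun τ h => mem_of_mem_nhds h
        filter_upwards [h1, eventually_mem_nhdsWithin] with τ h1 h2
        exact hconst τ ⟨h2, h1⟩
      · have hgv : g σ = 0 := by
          simp only [hg_def]
          rw [if_pos hcase, hzero, max_self]
        rw [hgv]
        exact runSup_hasDeriv_zero hΓ hσ0 hzero
      · obtain ⟨u, hu, huτ⟩ := hloc σ hσ0 hσD hcase hpos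
        have hgv : g σ = derivWithin Γ (Set.Ici 0) σ := by
          simp only [hg_def]
          rw [if_pos hcase, max_eq_left hpos.le]
        rw [hgv]
        apply (hd σ hσ0).congr_of_eventuallyEq ?_ hcase.symm
        have h1 : ∀ᶠ τ in nhdsWithin σ (Set.Ici 0), τ ∈ u :=
          (eventually_mem_nhds_iff.2 hu).filter_mono nhdsWithin_le_nhds |>.mono
            fun τ h => mem_of_mem_nhds h
        filter_upwards [h1, eventually_mem_nhdsWithin] with τ h1 h2
        exact huτ τ ⟨h1, h2⟩
    · -- Γ σ < runSup Γ σ : locally constant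
      have hlt : Γ σ < runSup Γ σ :=
        lt_of_le_of_ne (le_runSup hc ⟨hσ0, le_rfl⟩) hcase
      have hσpos : 0 < σ := by
        rcases eq_or_lt_of_le (Set.mem_Ici.1 hσ0) with h | h
        · exfalso; rw [← h] at hlt; rw [runSup_zero] at hlt; exact lt_irrefl _ hlt
        · exact h
      obtain ⟨δ, hδ, hconst⟩ := runSup_locally_const_of_lt hc hσpos hlt
      have hgv : g σ = 0 := by simp only [hg_def]; rw [if_neg hcase]
      rw [hgv]
      apply (hasDerivWithinAt_const σ (Set.Ici (0:ℝ)) (runSup Γ σ)).congr_of_eventuallyEq ?_ rfl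
      have h1 : ∀ᶠ τ in nhdsWithin σ (Set.Ici 0), τ ∈ Set.Ioo (σ - δ) (σ + δ) :=
        (eventually_mem_nhds_iff.2 (Ioo_mem_nhds (by linarith) (by linarith))).filter_mono
          nhdsWithin_le_nhds |>.mono fun τ h => mem_of_mem_nhds h
      filter_upwards [h1] with τ h1
      exact hconst τ h1
  -- continuity of g on the good set
  have gcont : ContinuousOn g (Set.Ici 0 \ D) := by
    rintro σ ⟨hσ0, hσD⟩
    by_cases hcase : Γ σ = runSup Γ σ
    · by_cases hpos : 0 < derivWithin Γ (Set.Ici 0) σ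
      · -- runSup = Γ locally, so g = max (Γ', 0) locally
        obtain ⟨u, hu, huτ⟩ := hloc σ hσ0 hσD hcase hpos
        have hcont : ContinuousWithinAt (fun τ => max (derivWithin Γ (Set.Ici 0) τ) 0)
            (Set.Ici 0 \ D) σ :=
          ((hdc σ hσ0).mono diff_subset).max continuousWithinAt_const
        apply hcont.congr_of_eventuallyEq ?_ (by simp only [hg_def]; rw [if_pos hcase])
        have h1 : ∀ᶠ τ in nhdsWithin σ (Set.Ici 0 \ D), τ ∈ u :=
          (eventually_mem_nhds_iff.2 hu).filter_mono nhdsWithin_le_nhds |>.mono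
            fun τ h => mem_of_mem_nhds h
        filter_upwards [h1, eventually_mem_nhdsWithin] with τ h1 h2
        simp only [hg_def]
        rw [if_pos (huτ τ ⟨h1, h2.1⟩).symm]
      · -- derivative ≤ 0 at a max point: squeeze g between 0 and max (Γ', 0)
        push_neg at hpos
        have hgv : g σ = 0 := by
          simp only [hg_def]; rw [if_pos hcase, max_eq_right hpos]
        have hsq : ∀ τ, 0 ≤ g τ ∧ g τ ≤ max (derivWithin Γ (Set.Ici 0) τ) 0 := by
          intro τ
          simp only [hg_def]
          split_ifs
          · exact ⟨le_max_right _ _, le_rfl⟩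
          · exact ⟨le_rfl, le_max_right _ _⟩
        unfold ContinuousWithinAt
        rw [hgv]
        have hub : Filter.Tendsto (fun τ => max (derivWithin Γ (Set.Ici 0) τ) 0)
            (nhdsWithin σ (Set.Ici 0 \ D)) (nhds 0) := by
          have h2 : ContinuousWithinAt (fun τ => max (derivWithin Γ (Set.Ici 0) τ) 0)
              (Set.Ici 0 \ D) σ :=
            ((hdc σ hσ0).mono diff_subset).max continuousWithinAt_const
          unfold ContinuousWithinAt at h2
          simpa only [max_eq_right hpos] using h2
        exact tendsto_of_tendsto_of_tendsto_of_le_of_le tendsto_const_nhds hub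
          (fun τ => (hsq τ).1) (fun τ => (hsq τ).2)
    · -- strict max point: g = 0 locally
      have hlt : Γ σ < runSup Γ σ :=
        lt_of_le_of_ne (le_runSup hc ⟨hσ0, le_rfl⟩) hcase
      have hσpos : 0 < σ := by
        rcases eq_or_lt_of_le (Set.mem_Ici.1 hσ0) with h | h
        · exfalso; rw [← h] at hlt; rw [runSup_zero] at hlt; exact lt_irrefl _ hlt
        · exact h
      obtain ⟨δ, hδ, hconst⟩ := runSup_locally_const_of_lt hc hσpos hlt
      have hca : ContinuousAt Γ σ := (hc σ hσ0).continuousAt (Ici_mem_nhds hσpos)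
      have hev : ∀ᶠ τ in nhds σ, Γ τ < runSup Γ σ := hca.eventually_lt continuousAt_const hlt
      have hgv : g σ = 0 := by simp only [hg_def]; rw [if_neg hcase]
      apply (continuousWithinAt_const (b := (0:ℝ))).congr_of_eventuallyEq ?_ hgv
      have h1 : ∀ᶠ τ in nhdsWithin σ (Set.Ici 0 \ D),
          τ ∈ Set.Ioo (σ - δ) (σ + δ) ∩ {τ | Γ τ < runSup Γ σ} :=
        (eventually_mem_nhds_iff.2 (inter_mem (Ioo_mem_nhds (by linarith) (by linarith))
          hev)).filter_mono nhdsWithin_le_nhds |>.mono fun τ h => mem_of_mem_nhds h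
      filter_upwards [h1] with τ hτ
      obtain ⟨h1, h2⟩ := hτ
      simp only [hg_def]
      rw [if_neg]
      rw [hconst τ h1]
      exact ne_of_lt h2
  -- countability of D
  have hcount : D.Countable := by
    have hsub : D ⊆ ⋃ q : ℚ, {σ : ℝ | σ ∈ D ∧ 0 ≤ (q:ℝ) ∧ (q:ℝ) < σ ∧
        runSup Γ (q:ℝ) = runSup Γ σ} := by
      intro σ hσ
      obtain ⟨hσpos, heq, hdpos, τ0, hτ00, hτ0σ, hcst⟩ := hσ
      obtain ⟨q, hq1, hq2⟩ := exists_rat_btwn hτ0σ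
      refine Set.mem_iUnion.2 ⟨q, ⟨hσpos, heq, hdpos, τ0, hτ00, hτ0σ, hcst⟩,
        le_trans hτ00 hq1.le, hq2, ?_⟩
      refine le_antisymm (runSup_mono hc (le_trans hτ00 hq1.le) hq2.le) ?_
      calc runSup Γ σ = runSup Γ τ0 := hcst.symm
        _ ≤ runSup Γ (q:ℝ) := runSup_mono hc hτ00 hq1.le
    refine Set.Countable.mono hsub (Set.countable_iUnion fun q => ?_)
    apply Set.Subsingleton.countable
    have haux : ∀ x y : ℝ, (x ∈ D ∧ 0 ≤ (q:ℝ) ∧ (q:ℝ) < x ∧ runSup Γ (q:ℝ) = runSup Γ x) →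
        (y ∈ D ∧ 0 ≤ (q:ℝ) ∧ (q:ℝ) < y ∧ runSup Γ (q:ℝ) = runSup Γ y) → x < y → False := by
      rintro x y ⟨hxD, hq0, hqx, hqx'⟩ ⟨hyD, -, hqy, hqy'⟩ hxy
      obtain ⟨hxpos, hxeq, hxd, -⟩ := hxD
      obtain ⟨τ, hτ, hgt⟩ := exists_right_gt hxpos.le hxy (hd x hxpos.le) hxd
      have h1 : Γ τ ≤ runSup Γ y := le_runSup hc ⟨le_trans hxpos.le hτ.1.le, hτ.2⟩
      have h2 : runSup Γ y = runSup Γ x := by rw [← hqy', hqx']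
      rw [h2, ← hxeq] at h1
      linarith
    intro x hx y hy
    by_contra hne
    rcases lt_or_gt_of_ne hne with h | h
    · exact haux x y hx hy h
    · exact haux y x hy hx h
  -- ContDiffOn on the good set
  have hcd : ContDiffOn ℝ 1 (runSup Γ) (Set.Ici 0 \ D) := by
    rw [show (1 : WithTop ℕ∞) = 0 + 1 by norm_num]
    rw [contDiffOn_succ_iff_hasFDerivWithinAt (by simp)]
    intro x hx
    refine ⟨Set.Ici 0 \ D, ?_, by simp, fun y => ContinuousLinearMap.smulRight
      (1 : ℝ →L[ℝ] ℝ) (g y), fun y hy => ((key y hy).mono diff_subset).hasFDerivWithinAt, ?_⟩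
    · rw [Set.insert_eq_of_mem hx]; exact self_mem_nhdsWithin
    · rw [contDiffOn_zero]
      exact (ContinuousLinearMap.smulRightL ℝ ℝ ℝ (1 : ℝ →L[ℝ] ℝ)).continuous.comp_continuousOn
        gcont
  refine ⟨D, hcount, fun σ hσ => hσ.1.le, hcd, ?_⟩
  -- behavior at points of D
  rintro σ ⟨hσpos, heq, hdpos, τ0, hτ00, hτ0σ, hcst⟩
  refine ⟨?_, ?_, hdpos⟩
  · -- left derivative 0
    have hconst : ∀ τ ∈ Set.Icc τ0 σ, runSup Γ τ = runSup Γ σ := by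
      intro τ hτ
      refine le_antisymm (runSup_mono hc (le_trans hτ00 hτ.1) hτ.2) ?_
      calc runSup Γ σ = runSup Γ τ0 := hcst.symm
        _ ≤ runSup Γ τ := runSup_mono hc hτ00 hτ.1
    apply (hasDerivWithinAt_const σ (Set.Iic σ) (runSup Γ σ)).congr_of_eventuallyEq ?_ rfl
    have h1 : ∀ᶠ τ in nhdsWithin σ (Set.Iic σ), τ ∈ Set.Ioi τ0 :=
      (eventually_mem_nhds_iff.2 (Ioi_mem_nhds hτ0σ)).filter_mono nhdsWithin_le_nhds |>.mono
        fun τ h => mem_of_mem_nhds h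
    filter_upwards [h1, eventually_mem_nhdsWithin] with τ h1 h2
    exact hconst τ ⟨le_of_lt h1, h2⟩
  · -- right derivative Γ'
    obtain ⟨a, b, ha0, haσ, hσb, -, -, hmono, hform⟩ := loc_struct hΓ hσpos.le hdpos
    have hright : ∀ τ ∈ Set.Icc σ b, runSup Γ τ = Γ τ := by
      intro τ hτ
      have hτm : τ ∈ Set.Icc a b := ⟨le_trans haσ hτ.1, hτ.2⟩
      rw [hform τ hτm]
      apply max_eq_right
      calc runSup Γ a ≤ runSup Γ σ := runSup_mono hc ha0 haσ
        _ = Γ σ := heq.symm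
        _ ≤ Γ τ := hmono.monotoneOn ⟨haσ, hσb.le⟩ hτm hτ.1
    apply ((hd σ hσpos.le).mono (Set.Ici_subset_Ici.2 hσpos.le)).congr_of_eventuallyEq ?_
      heq.symm
    have h1 : ∀ᶠ τ in nhdsWithin σ (Set.Ici σ), τ ∈ Set.Iio b :=
      (eventually_mem_nhds_iff.2 (Iio_mem_nhds hσb)).filter_mono nhdsWithin_le_nhds |>.mono
        fun τ h => mem_of_mem_nhds h
    filter_upwards [h1, eventually_mem_nhdsWithin] with τ h1 h2
    exact hright τ ⟨h2, le_of_lt h1⟩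
end

section
/- Let δ > 0 and let Θ:[0,∞)→[0,∞) be continuous, strictly increasing with Θ(0)=0 and Θ(t)→∞, and let Θ̃:[0,∞)→[0,∞) be continuous, strictly increasing with Θ̃(0)=0, Θ̃ ≤ Θ, and Θ̃(t) − t/δ = inf_{0 ≤ s ≤ t}(Θ(s) − s/δ) for all t. Then the inverse functions Γ = Θ⁻¹ and Γ̃ = Θ̃⁻¹ satisfy Γ̃(σ) − δσ = sup_{0 ≤ τ ≤ σ}(Γ(τ) − δτ) for all σ ≥ 0. -/
open MeasureTheory Real

/-- If `Θ` and `Θ̃` are continuous strictly increasing bijections of `[0,∞)`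
with `Θ̃ ≤ Θ` and `Θ̃(t) − t/δ = inf_{0≤s≤t}(Θ(s) − s/δ)`, then their inverses
`Γ = Θ⁻¹` and `Γ̃ = Θ̃⁻¹` satisfy
`Γ̃(σ) − δσ = sup_{0≤τ≤σ}(Γ(τ) − δτ)` for all `σ ≥ 0`. -/
theorem inverse_tilted_running_sup (δ : ℝ) (hδ : 0 < δ)
    (Θ tΘ Γ tΓ : ℝ → ℝ)
    (hΘc : ContinuousOn Θ (Set.Ici 0)) (hΘm : StrictMonoOn Θ (Set.Ici 0))
    (hΘ0 : Θ 0 = 0) (hΘtop : Filter.Tendsto Θ Filter.atTop Filter.atTop)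
    (htΘc : ContinuousOn tΘ (Set.Ici 0)) (htΘm : StrictMonoOn tΘ (Set.Ici 0))
    (htΘ0 : tΘ 0 = 0)
    (hle : ∀ t, 0 ≤ t → tΘ t ≤ Θ t)
    (hinf : ∀ t, 0 ≤ t →
      tΘ t - t / δ = sInf ((fun s => Θ s - s / δ) '' Set.Icc 0 t))
    (hΓ : ∀ σ, 0 ≤ σ → 0 ≤ Γ σ ∧ Θ (Γ σ) = σ)
    (htΓ : ∀ σ, 0 ≤ σ → 0 ≤ tΓ σ ∧ tΘ (tΓ σ) = σ) :
    ∀ σ, 0 ≤ σ →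
      tΓ σ - δ * σ = sSup ((fun τ => Γ τ - δ * τ) '' Set.Icc 0 σ) := by
  intro σ hσ
  obtain ⟨hu0, huΘ⟩ := htΓ σ hσ
  set u := tΓ σ with hu
  -- the infimum over [0,u] is attained
  have hsub : Set.Icc (0:ℝ) u ⊆ Set.Ici 0 := fun x hx => hx.1
  have hfc : ContinuousOn (fun s => Θ s - s / δ) (Set.Icc 0 u) :=
    (hΘc.mono hsub).sub (continuousOn_id.div_const δ)
  obtain ⟨s, hsmem, hsmin⟩ :=
    (isCompact_Icc).exists_isMinOn (Set.nonempty_Icc.2 hu0) hfc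
  have hmin : ∀ x ∈ Set.Icc (0:ℝ) u, Θ s - s / δ ≤ Θ x - x / δ := fun x hx => hsmin hx
  have hleast : IsLeast ((fun s => Θ s - s / δ) '' Set.Icc 0 u) (Θ s - s / δ) :=
    ⟨⟨s, hsmem, rfl⟩, by rintro _ ⟨x, hx, rfl⟩; exact hmin x hx⟩
  have hval : tΘ u - u / δ = Θ s - s / δ := by
    rw [hinf u hu0, hleast.csInf_eq]
  rw [huΘ] at hval
  -- key inequality: any τ ∈ [0,σ] gives Γ τ - δτ ≤ u - δσ
  have hub : ∀ τ ∈ Set.Icc (0:ℝ) σ, Γ τ - δ * τ ≤ u - δ * σ := by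
    intro τ hτ
    obtain ⟨hv0, hvΘ⟩ := hΓ τ hτ.1
    set v := Γ τ with hv
    have hvu : v ≤ u := by
      by_contra hlt
      push_neg at hlt
      have h1 : tΘ u < tΘ v := htΘm hu0 (le_trans hu0 hlt.le) hlt
      have h2 : tΘ v ≤ Θ v := hle v (le_trans hu0 hlt.le)
      rw [huΘ, hvΘ] at *
      linarith [hτ.2, h1, h2]
    have h3 : σ - u / δ ≤ Θ v - v / δ := hval ▸ hmin v ⟨hv0, hvu⟩
    rw [hvΘ] at h3
    have h4 : (σ - u / δ) * δ ≤ (τ - v / δ) * δ :=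
      mul_le_mul_of_nonneg_right h3 hδ.le
    have hδ' : δ ≠ 0 := hδ.ne'
    field_simp at h4
    linarith
  -- the sup is attained at τ* = Θ s
  have hs0 : (0:ℝ) ≤ s := hsmem.1
  have hτ0 : (0:ℝ) ≤ Θ s := by
    rw [← hΘ0]; exact hΘm.monotoneOn (le_refl (0:ℝ)) hs0 hs0
  have h6 : (σ - u / δ) * δ = (Θ s - s / δ) * δ := by rw [hval]
  have hδ' : δ ≠ 0 := hδ.ne'
  field_simp at h6
  have hτσ : Θ s ≤ σ := by nlinarith [hsmem.2, h6, hδ]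
  have hΓτ : Γ (Θ s) = s := by
    obtain ⟨hg0, hgΘ⟩ := hΓ (Θ s) hτ0
    exact hΘm.injOn hg0 hs0 hgΘ
  have hattain : Γ (Θ s) - δ * (Θ s) = u - δ * σ := by
    rw [hΓτ]
    nlinarith [h6, hδ]
  have hgreat : IsGreatest ((fun τ => Γ τ - δ * τ) '' Set.Icc 0 σ) (u - δ * σ) := by
    constructor
    · exact ⟨Θ s, ⟨hτ0, hτσ⟩, hattain⟩
    · rintro _ ⟨τ, hτ, rfl⟩; exact hub τ hτ
  rw [hgreat.csSup_eq]
end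

section
/- Fix μ_m ≤ μ_M and x > 0. The function σ ↦ (x/σ^{3/2} + (μ_M − μ_m)/√σ)·exp(−((x − μ_m σ)² ∧ (x − μ_M σ)²)/(2σ)) is bounded on (0,∞), tends to 0 as σ → 0⁺, and tends to 0 as σ → ∞. -/
open MeasureTheory Real Filter

/-- The uniform first-passage-time density bound
`σ ↦ (x/σ^{3/2} + (μ_M − μ_m)/√σ) exp(−((x−μ_mσ)² ∧ (x−μ_Mσ)²)/(2σ))`. -/
noncomputable def fptBound (μm μM x σ : ℝ) : ℝ :=
  (x / Real.sqrt (σ ^ 3) + (μM - μm) / Real.sqrt σ) *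
    Real.exp (-(min ((x - μm * σ) ^ 2) ((x - μM * σ) ^ 2)) / (2 * σ))

/-- For `μ_m ≤ μ_M` and `x > 0`, the density bound is bounded on `(0,∞)`,
tends to `0` as `σ → 0⁺`, and tends to `0` as `σ → ∞`. -/
theorem fptBound_properties (μm μM x : ℝ) (h : μm ≤ μM) (hx : 0 < x) :
    BddAbove (fptBound μm μM x '' Set.Ioi 0) ∧
      Tendsto (fptBound μm μM x) (nhdsWithin 0 (Set.Ioi 0)) (nhds 0) ∧
      Tendsto (fptBound μm μM x) atTop (nhds 0) := by
  have hc : (0:ℝ) ≤ μM - μm := sub_nonneg.mpr h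
  -- nonnegativity of the function on (0,∞)
  have hnn : ∀ σ : ℝ, 0 < σ → 0 ≤ fptBound μm μM x σ := by
    intro σ hσ
    have h1 : 0 ≤ x / Real.sqrt (σ ^ 3) := by positivity
    have h2 : 0 ≤ (μM - μm) / Real.sqrt σ := by positivity
    exact mul_nonneg (add_nonneg h1 h2) (Real.exp_pos _).le
  -- the exponential factor is at most 1
  have hexp1 : ∀ σ : ℝ, 0 < σ →
      Real.exp (-(min ((x - μm * σ) ^ 2) ((x - μM * σ) ^ 2)) / (2 * σ)) ≤ 1 := by
    intro σ hσ
    rw [show (1:ℝ) = Real.exp 0 from (Real.exp_zero).symm]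
    apply Real.exp_le_exp.mpr
    apply div_nonpos_of_nonpos_of_nonneg
    · exact neg_nonpos.mpr (le_min (sq_nonneg _) (sq_nonneg _))
    · positivity
  -- √ tends to atTop
  have hsqrt : Tendsto (fun σ : ℝ => Real.sqrt σ) atTop atTop := by
    have : (fun σ : ℝ => Real.sqrt σ) = fun σ : ℝ => σ ^ (1/2 : ℝ) :=
      funext fun σ => Real.sqrt_eq_rpow σ
    rw [this]
    exact tendsto_rpow_atTop (by norm_num)
  have hsqrt3 : Tendsto (fun σ : ℝ => Real.sqrt (σ ^ 3)) atTop atTop :=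
    hsqrt.comp (tendsto_pow_atTop (three_ne_zero))
  -- the limit at ∞
  have hlimtop : Tendsto (fptBound μm μM x) atTop (nhds 0) := by
    have hg : Tendsto (fun σ : ℝ => x / Real.sqrt (σ ^ 3) + (μM - μm) / Real.sqrt σ)
        atTop (nhds 0) := by
      have t1 : Tendsto (fun _ : ℝ => x) atTop (nhds x) := tendsto_const_nhds
      have t2 : Tendsto (fun _ : ℝ => μM - μm) atTop (nhds (μM - μm)) := tendsto_const_nhds
      have := (t1.div_atTop hsqrt3).add (t2.div_atTop hsqrt)
      simpa using this
    have t0 : Tendsto (fun _ : ℝ => (0:ℝ)) atTop (nhds 0) := tendsto_const_nhds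
    apply tendsto_of_tendsto_of_tendsto_of_le_of_le' t0 hg
    · filter_upwards [eventually_gt_atTop (0:ℝ)] with σ hσ using hnn σ hσ
    · filter_upwards [eventually_gt_atTop (0:ℝ)] with σ hσ
      have h1 : 0 ≤ x / Real.sqrt (σ ^ 3) + (μM - μm) / Real.sqrt σ := by positivity
      exact mul_le_of_le_one_right h1 (hexp1 σ hσ)
  -- the limit at 0⁺
  obtain ⟨M1, hM1, hM1ge⟩ : ∃ M1 : ℝ, 0 < M1 ∧ max |μm| |μM| ≤ M1 :=
    ⟨max |μm| |μM| + 1, by positivity, by linarith⟩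
  obtain ⟨δ, hδpos, hδ1, hδ2⟩ : ∃ δ : ℝ, 0 < δ ∧ δ ≤ 1 ∧ δ ≤ x / (2 * M1) :=
    ⟨min 1 (x / (2 * M1)), lt_min one_pos (by positivity), min_le_left _ _, min_le_right _ _⟩
  -- key bound on (0, δ)
  have hkey : ∀ σ : ℝ, 0 < σ → σ < δ →
      fptBound μm μM x σ ≤
        (x + (μM - μm)) * ((σ⁻¹) ^ (3/2 : ℝ) * Real.exp (-(x ^ 2 / 8) * σ⁻¹)) := by
    intro σ hσ hσδ
    have hσ1 : σ ≤ 1 := le_of_lt (lt_of_lt_of_le hσδ hδ1)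
    have hσ2 : σ < x / (2 * M1) := lt_of_lt_of_le hσδ hδ2
    have hs3 : Real.sqrt (σ ^ 3) = σ ^ (3/2 : ℝ) := by
      rw [Real.sqrt_eq_rpow, ← Real.rpow_natCast σ 3, ← Real.rpow_mul hσ.le]
      norm_num
    have hs1 : Real.sqrt σ = σ ^ (1/2 : ℝ) := Real.sqrt_eq_rpow σ
    have hinv : (σ⁻¹) ^ (3/2 : ℝ) = (σ ^ (3/2 : ℝ))⁻¹ := Real.inv_rpow hσ.le _
    have hrpowpos : 0 < σ ^ (3/2 : ℝ) := Real.rpow_pos_of_pos hσ _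
    have hrpow12 : 0 < σ ^ (1/2 : ℝ) := Real.rpow_pos_of_pos hσ _
    -- prefactor bound
    have hA : x / Real.sqrt (σ ^ 3) + (μM - μm) / Real.sqrt σ ≤
        (x + (μM - μm)) * (σ⁻¹) ^ (3/2 : ℝ) := by
      rw [hs3, hs1, hinv]
      have hle : σ ^ (3/2 : ℝ) ≤ σ ^ (1/2 : ℝ) :=
        Real.rpow_le_rpow_of_exponent_ge hσ hσ1 (by norm_num)
      have h2 : (μM - μm) / σ ^ (1/2 : ℝ) ≤ (μM - μm) / σ ^ (3/2 : ℝ) :=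
        div_le_div_of_nonneg_left hc hrpowpos hle
      calc x / σ ^ (3/2 : ℝ) + (μM - μm) / σ ^ (1/2 : ℝ)
          ≤ x / σ ^ (3/2 : ℝ) + (μM - μm) / σ ^ (3/2 : ℝ) := by gcongr
        _ = (x + (μM - μm)) * (σ ^ (3/2 : ℝ))⁻¹ := by
            field_simp
    -- exponential bound
    have hmin : x ^ 2 / 4 ≤ min ((x - μm * σ) ^ 2) ((x - μM * σ) ^ 2) := by
      have key : ∀ μ : ℝ, |μ| ≤ max |μm| |μM| → x ^ 2 / 4 ≤ (x - μ * σ) ^ 2 := by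
        intro μ hμ
        have h1 : μ * σ ≤ x / 2 := by
          have h2 : μ * σ ≤ M1 * σ := by
            apply mul_le_mul_of_nonneg_right _ hσ.le
            calc μ ≤ |μ| := le_abs_self μ
              _ ≤ max |μm| |μM| := hμ
              _ ≤ M1 := hM1ge
          have h3 : M1 * σ ≤ M1 * (x / (2 * M1)) := by
            exact mul_le_mul_of_nonneg_left hσ2.le hM1.le
          have h4 : M1 * (x / (2 * M1)) = x / 2 := by
            field_simp
          linarith
        have h5 : x / 2 ≤ x - μ * σ := by linarith
        have h6 : (x/2) ^ 2 ≤ (x - μ * σ) ^ 2 := by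
          apply pow_le_pow_left₀ (by positivity) h5
        calc x ^ 2 / 4 = (x / 2) ^ 2 := by ring
          _ ≤ _ := h6
      exact le_min (key μm (le_max_left _ _)) (key μM (le_max_right _ _))
    have harg : -(min ((x - μm * σ) ^ 2) ((x - μM * σ) ^ 2)) / (2 * σ) ≤
        -(x ^ 2 / 8) * σ⁻¹ := by
      have h7 : (x ^ 2 / 8) * σ⁻¹ = (x ^ 2 / 4) / (2 * σ) := by
        field_simp
        ring
      have h8 : (x ^ 2 / 4) / (2 * σ) ≤
          min ((x - μm * σ) ^ 2) ((x - μM * σ) ^ 2) / (2 * σ) := by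
        gcongr
      have h9 : -(min ((x - μm * σ) ^ 2) ((x - μM * σ) ^ 2)) / (2 * σ) =
          -(min ((x - μm * σ) ^ 2) ((x - μM * σ) ^ 2) / (2 * σ)) := by ring
      rw [h9]
      rw [show -(x ^ 2 / 8) * σ⁻¹ = -((x ^ 2 / 8) * σ⁻¹) by ring, h7]
      exact neg_le_neg h8
    have hE : Real.exp (-(min ((x - μm * σ) ^ 2) ((x - μM * σ) ^ 2)) / (2 * σ)) ≤
        Real.exp (-(x ^ 2 / 8) * σ⁻¹) := Real.exp_le_exp.mpr harg
    calc fptBound μm μM x σ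
        ≤ ((x + (μM - μm)) * (σ⁻¹) ^ (3/2 : ℝ)) * Real.exp (-(x ^ 2 / 8) * σ⁻¹) := by
          apply mul_le_mul hA hE (Real.exp_pos _).le
          have h10 : 0 < (σ⁻¹) ^ (3/2 : ℝ) := Real.rpow_pos_of_pos (by positivity) _
          exact mul_nonneg (by linarith) h10.le
      _ = (x + (μM - μm)) * ((σ⁻¹) ^ (3/2 : ℝ) * Real.exp (-(x ^ 2 / 8) * σ⁻¹)) := by
          ring
  have hlimzero : Tendsto (fptBound μm μM x) (nhdsWithin 0 (Set.Ioi 0)) (nhds 0) := by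
    have hb : (0:ℝ) < x ^ 2 / 8 := by positivity
    have hF : Tendsto (fun σ : ℝ =>
        (x + (μM - μm)) * ((σ⁻¹) ^ (3/2 : ℝ) * Real.exp (-(x ^ 2 / 8) * σ⁻¹)))
        (nhdsWithin 0 (Set.Ioi 0)) (nhds 0) := by
      have h1 := (tendsto_rpow_mul_exp_neg_mul_atTop_nhds_zero (3/2) (x ^ 2 / 8)
        hb).comp tendsto_inv_nhdsGT_zero
      have h2 := h1.const_mul (x + (μM - μm))
      simpa using h2
    have t0 : Tendsto (fun _ : ℝ => (0:ℝ)) (nhdsWithin 0 (Set.Ioi 0)) (nhds 0) :=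
      tendsto_const_nhds
    apply tendsto_of_tendsto_of_tendsto_of_le_of_le' t0 hF
    · filter_upwards [self_mem_nhdsWithin] with σ hσ using hnn σ hσ
    · filter_upwards [Ioo_mem_nhdsGT_of_mem (Set.mem_Ico.mpr ⟨le_refl 0, hδpos⟩)]
        with σ hσ
      exact hkey σ hσ.1 hσ.2
  -- boundedness
  have hcont : ContinuousOn (fptBound μm μM x) (Set.Ioi 0) := by
    apply ContinuousOn.mul
    · apply ContinuousOn.add
      · apply continuousOn_const.div
          ((Real.continuous_sqrt.comp (continuous_pow 3)).continuousOn)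
        intro σ hσ
        have hσ' : (0:ℝ) < σ := hσ
        exact ne_of_gt (Real.sqrt_pos.mpr (pow_pos hσ' 3))
      · apply continuousOn_const.div (Real.continuous_sqrt.continuousOn)
        intro σ hσ
        have hσ' : (0:ℝ) < σ := hσ
        exact ne_of_gt (Real.sqrt_pos.mpr hσ')
    · apply Continuous.comp_continuousOn Real.continuous_exp
      apply ContinuousOn.div
      · exact Continuous.continuousOn (by fun_prop)
      · exact Continuous.continuousOn (by fun_prop)
      · intro σ hσ
        have hσ' : (0:ℝ) < σ := hσ
        positivity
  have hbdd : BddAbove (fptBound μm μM x '' Set.Ioi 0) := by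
    obtain ⟨ε, hε, hεsub⟩ := mem_nhdsGT_iff_exists_Ioo_subset.mp
      (hlimzero.eventually_lt_const one_pos)
    obtain ⟨N, hN⟩ := eventually_atTop.mp (hlimtop.eventually_lt_const one_pos)
    have hεpos : (0:ℝ) < ε := hε
    set K : Set ℝ := Set.Icc (ε/2) (max N ε) with hK
    have hKc : IsCompact K := isCompact_Icc
    have hKsub : K ⊆ Set.Ioi 0 := fun σ hσ => lt_of_lt_of_le (by positivity) hσ.1
    have hKbdd : BddAbove (fptBound μm μM x '' K) :=
      (hKc.image_of_continuousOn (hcont.mono hKsub)).bddAbove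
    obtain ⟨B, hB⟩ := hKbdd
    refine ⟨max B 1, ?_⟩
    rintro y ⟨σ, hσ, rfl⟩
    have hσ' : (0:ℝ) < σ := hσ
    by_cases h1 : σ < ε
    · have : fptBound μm μM x σ < 1 := hεsub ⟨hσ', h1⟩
      exact le_trans this.le (le_max_right _ _)
    · push_neg at h1
      by_cases h2 : N ≤ σ
      · exact le_trans (hN σ h2).le (le_max_right _ _)
      · push_neg at h2
        have hσK : σ ∈ K := ⟨by linarith, le_max_of_le_left h2.le⟩
        exact le_trans (hB (Set.mem_image_of_mem _ hσK)) (le_max_left _ _)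
  exact ⟨hbdd, hlimzero, hlimtop⟩
end

section
/- Let δ > 0 and θ:[0,∞)→[0,∞) be measurable, and suppose z:[0,∞)→[0,∞) is continuous with B(t) = 𝟙_{{E(t) > 0} ∪ {z(t) > z_δ}} and E(t) = E(0) + ∫₀ᵗ B(s)(L(z(s)) − 1/δ) ds with E(0) ≥ 0 and L(z) = z/δ₂, δ₂ = δ/(λ₂ + ν₂δ). If z₁ ≥ z₂ pointwise, then the corresponding excess functions satisfy E₁ ≥ E₂ pointwise (monotonicity of the buffer excess in the input). -/
open MeasureTheory Real Set


private lemma buffer_pt (c δ : ℝ) (hc : 0 < c) (hδ : 0 < δ)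
    {e₁ e₂ w₁ w₂ : ℝ} (he : e₁ ≤ e₂) (hw : w₂ ≤ w₁) :
    (if 0 < e₂ ∨ 1 / c < w₂ then (1:ℝ) else 0) * (w₂ / (δ / c) - 1 / δ) ≤
    (if 0 < e₁ ∨ 1 / c < w₁ then (1:ℝ) else 0) * (w₁ / (δ / c) - 1 / δ) := by
  have hδc : 0 < δ / c := div_pos hδ hc
  have hkey : (1/c) / (δ/c) = 1/δ := by field_simp
  split_ifs with h2 h1 h1
  · have : w₂ / (δ / c) ≤ w₁ / (δ / c) := by gcongr
    linarith
  · push_neg at h1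
    have : w₂ / (δ / c) ≤ (1/c) / (δ / c) := by gcongr; exact hw.trans h1.2
    rw [hkey] at this
    linarith
  · push_neg at h2
    rcases h1 with h | h
    · linarith [he.trans h2.1]
    · have : (1/c) / (δ / c) ≤ w₁ / (δ / c) := by gcongr
      rw [hkey] at this
      linarith
  · simp

private lemma buffer_integrable (c δ : ℝ) (z E : ℝ → ℝ) (hz : Continuous z)
    (hE : ∀ t, 0 ≤ t → E t = E 0 + ∫ s in (0:ℝ)..t,
      (if 0 < E s ∨ 1 / c < z s then (1:ℝ) else 0) * (z s / (δ / c) - 1 / δ)) :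
    ∀ T, 0 ≤ T → IntervalIntegrable
      (fun s => (if 0 < E s ∨ 1 / c < z s then (1:ℝ) else 0) * (z s / (δ / c) - 1 / δ))
      volume 0 T := by
  set h : ℝ → ℝ := fun s => z s / (δ / c) - 1 / δ with hh
  have hhcont : Continuous h := (hz.div_const _).sub continuous_const
  set S : Set ℝ := {s | 0 < E s ∨ 1 / c < z s} with hSdef
  set g : ℝ → ℝ := fun s => (if 0 < E s ∨ 1 / c < z s then (1:ℝ) else 0) * h s with hgdef
  have hgind : g = S.indicator h := by
    funext s
    by_cases hs : s ∈ S
    · simp only [hgdef, Set.indicator_of_mem hs]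
      rw [if_pos (show 0 < E s ∨ 1 / c < z s from hs), one_mul]
    · simp only [hgdef, Set.indicator_of_notMem hs]
      rw [if_neg (show ¬(0 < E s ∨ 1 / c < z s) from hs), zero_mul]
  have hmono : ∀ T T' : ℝ, 0 ≤ T' → T' ≤ T → IntervalIntegrable g volume 0 T →
      IntervalIntegrable g volume 0 T' := by
    intro T T' h0 hle hi
    refine hi.mono_set ?_
    rw [Set.uIcc_of_le h0, Set.uIcc_of_le (h0.trans hle)]
    exact Set.Icc_subset_Icc le_rfl hle
  by_contra hcon
  push_neg at hcon
  obtain ⟨T₀, hT₀0, hT₀⟩ := hcon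
  set Ac : Set ℝ := {t | 0 ≤ t ∧ ¬ IntervalIntegrable g volume 0 t} with hAcdef
  have hT₀Ac : T₀ ∈ Ac := ⟨hT₀0, hT₀⟩
  have hbdd : BddBelow Ac := ⟨0, fun x hx => hx.1⟩
  set T' : ℝ := sInf Ac with hT'def
  have hT'0 : 0 ≤ T' := le_csInf ⟨T₀, hT₀Ac⟩ fun x hx => hx.1
  have hT'le : T' ≤ T₀ := csInf_le hbdd hT₀Ac
  have hlow : ∀ t, 0 ≤ t → t < T' → IntervalIntegrable g volume 0 t := by
    intro t ht0 htT
    by_contra hni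
    exact absurd (csInf_le hbdd ⟨ht0, hni⟩) (not_le.mpr htT)
  have hhigh : ∀ t, T' < t → ¬ IntervalIntegrable g volume 0 t := by
    intro t htT hi
    obtain ⟨a, haAc, hat⟩ := exists_lt_of_csInf_lt ⟨T₀, hT₀Ac⟩ htT
    exact haAc.2 (hmono t a haAc.1 hat.le hi)
  have hEconst : ∀ t, T' < t → E t = E 0 := by
    intro t htT
    rw [hE t (hT'0.trans htT.le)]
    rw [intervalIntegral.integral_undef (hhigh t htT), add_zero]
  set F : ℝ → ℝ := fun t => ∫ s in (0:ℝ)..t, g s with hFdef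
  have hFcont : ContinuousOn F (Set.Ico 0 T') := by
    intro t ht
    have hmid : t < (t + T') / 2 := by linarith [ht.2]
    have hmid2 : (t + T') / 2 < T' := by linarith [ht.2]
    have hmid0 : 0 ≤ (t + T') / 2 := le_trans ht.1 hmid.le
    have hi := hlow _ hmid0 hmid2
    have hconT : ContinuousOn F (Set.uIcc 0 ((t + T') / 2)) :=
      intervalIntegral.continuousOn_primitive_interval' hi Set.left_mem_uIcc
    have htmem : t ∈ Set.uIcc 0 ((t + T') / 2) := by
      rw [Set.uIcc_of_le hmid0]; exact ⟨ht.1, hmid.le⟩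
    refine (hconT t htmem).mono_of_mem_nhdsWithin ?_
    rw [Set.uIcc_of_le hmid0]
    exact mem_nhdsWithin.mpr
      ⟨Set.Iio ((t + T') / 2), isOpen_Iio, hmid, fun x hx => ⟨hx.2.1, hx.1.le⟩⟩
  set μ : Measure ℝ := volume.restrict (Set.Ioc 0 T₀) with hμdef
  have hne : ∀ᵐ t ∂μ, t ≠ T' := by
    refine ae_restrict_of_ae ?_
    rw [ae_iff]
    simp only [ne_eq, not_not, setOf_eq_eq_singleton]
    exact measure_singleton T'
  have hEae : AEMeasurable E μ := by
    have hGae : AEMeasurable (fun t => E 0 + (Set.Ico 0 T').indicator F t) μ := by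
      refine aemeasurable_const.add ?_
      rw [aemeasurable_indicator_iff measurableSet_Ico]
      refine AEMeasurable.mono_measure (hFcont.aemeasurable (μ := volume) measurableSet_Ico) ?_
      rw [Measure.restrict_restrict measurableSet_Ico]
      exact Measure.restrict_mono Set.inter_subset_left le_rfl
    refine hGae.congr ?_
    filter_upwards [ae_restrict_mem measurableSet_Ioc, hne] with t ht htne
    rcases lt_or_gt_of_ne htne with hlt | hgt
    · rw [Set.indicator_of_mem (Set.mem_Ico.mpr ⟨ht.1.le, hlt⟩)]
      exact (hE t ht.1.le).symm
    · rw [Set.indicator_of_notMem (fun hmem => absurd (Set.mem_Ico.mp hmem).2 (not_lt.mpr hgt.le)), add_zero]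
      exact (hEconst t hgt).symm
  have hNM : NullMeasurableSet S μ := by
    have h1 : NullMeasurableSet (E ⁻¹' Set.Ioi 0) μ :=
      hEae.nullMeasurable measurableSet_Ioi
    have h2 : NullMeasurableSet {s | 1 / c < z s} μ :=
      ((isOpen_lt continuous_const hz).measurableSet).nullMeasurableSet
    have hSeq : S = E ⁻¹' Set.Ioi 0 ∪ {s | 1 / c < z s} := by
      ext s; simp [hSdef, Set.mem_setOf_eq]
    rw [hSeq]
    exact h1.union h2
  have hgae : AEMeasurable g μ := by
    rw [hgind]
    exact (aemeasurable_indicator_iff₀ hNM).mpr hhcont.aemeasurable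
  obtain ⟨C, hC⟩ := (isCompact_Icc (a := (0:ℝ)) (b := T₀)).exists_bound_of_continuousOn
    hhcont.continuousOn
  have hint : IntegrableOn g (Set.Ioc 0 T₀) volume := by
    refine Integrable.mono' (integrable_const C) hgae.aestronglyMeasurable ?_
    filter_upwards [ae_restrict_mem measurableSet_Ioc] with x hx
    rw [hgind]
    exact (norm_indicator_le_norm_self h x).trans (hC x ⟨hx.1.le, hx.2⟩)
  exact hT₀ ((intervalIntegrable_iff_integrableOn_Ioc_of_le hT₀0).mpr hint)


/-- Monotonicity of the buffer excess function in the input: for the δ-buffer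
mechanism with linear branch `L(z) = z/δ₂`, `δ₂ = δ/(lam₂ + ν₂δ)`, threshold
`z_δ = 1/(lam₂ + ν₂δ)`, blowup indicator `B(t) = 𝟙_{{E(t)>0} ∪ {z(t)>z_δ}}`, and
excess `E(t) = E(0) + ∫₀ᵗ B(s)(L(z(s)) − 1/δ) ds`: if `z₁ ≥ z₂` pointwise,
then `E₁ ≥ E₂` pointwise on `[0,∞)`. -/
theorem buffer_excess_monotone (ν₂ lam₂ δ : ℝ)
    (hν : 0 < ν₂) (hlam : 0 < lam₂) (hδ : 0 < δ)
    (z₁ z₂ E₁ E₂ : ℝ → ℝ)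
    (hz₁ : Continuous z₁) (hz₂ : Continuous z₂)
    (hz₁nn : ∀ t, 0 ≤ z₁ t) (hz₂nn : ∀ t, 0 ≤ z₂ t)
    (hE0 : E₁ 0 = E₂ 0) (hE0nn : 0 ≤ E₁ 0)
    (hE₁ : ∀ t, 0 ≤ t → E₁ t = E₁ 0 + ∫ s in (0:ℝ)..t,
      (if 0 < E₁ s ∨ 1 / (lam₂ + ν₂ * δ) < z₁ s then (1:ℝ) else 0) *
        (z₁ s / (δ / (lam₂ + ν₂ * δ)) - 1 / δ))
    (hE₂ : ∀ t, 0 ≤ t → E₂ t = E₂ 0 + ∫ s in (0:ℝ)..t,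
      (if 0 < E₂ s ∨ 1 / (lam₂ + ν₂ * δ) < z₂ s then (1:ℝ) else 0) *
        (z₂ s / (δ / (lam₂ + ν₂ * δ)) - 1 / δ))
    (hmono : ∀ t, z₂ t ≤ z₁ t) :
    ∀ t, 0 ≤ t → E₂ t ≤ E₁ t := by
  intro t₁ ht₁0
  by_contra hcon
  push_neg at hcon
  have hc : 0 < lam₂ + ν₂ * δ := by positivity
  set c : ℝ := lam₂ + ν₂ * δ with hcdef
  set g₁ : ℝ → ℝ := fun s =>
    (if 0 < E₁ s ∨ 1 / c < z₁ s then (1:ℝ) else 0) * (z₁ s / (δ / c) - 1 / δ) with hg₁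
  set g₂ : ℝ → ℝ := fun s =>
    (if 0 < E₂ s ∨ 1 / c < z₂ s then (1:ℝ) else 0) * (z₂ s / (δ / c) - 1 / δ) with hg₂
  have hint₁ : ∀ T, 0 ≤ T → IntervalIntegrable g₁ volume 0 T :=
    buffer_integrable c δ z₁ E₁ hz₁ hE₁
  have hint₂ : ∀ T, 0 ≤ T → IntervalIntegrable g₂ volume 0 T :=
    buffer_integrable c δ z₂ E₂ hz₂ hE₂
  have hcont : ∀ (E' g : ℝ → ℝ), (∀ t, 0 ≤ t → E' t = E' 0 + ∫ s in (0:ℝ)..t, g s) →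
      (∀ T, 0 ≤ T → IntervalIntegrable g volume 0 T) → ContinuousOn E' (Set.Icc 0 t₁) := by
    intro E' g hEq hInt
    have h1 : ContinuousOn (fun t => E' 0 + ∫ s in (0:ℝ)..t, g s) (Set.Icc 0 t₁) := by
      refine continuousOn_const.add ?_
      have := intervalIntegral.continuousOn_primitive_interval' (hInt t₁ ht₁0)
        Set.left_mem_uIcc
      rwa [Set.uIcc_of_le ht₁0] at this
    exact h1.congr fun t ht => hEq t ht.1
  have hcont₁ : ContinuousOn E₁ (Set.Icc 0 t₁) := hcont E₁ g₁ hE₁ hint₁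
  have hcont₂ : ContinuousOn E₂ (Set.Icc 0 t₁) := hcont E₂ g₂ hE₂ hint₂
  set D : ℝ → ℝ := fun s => E₁ s - E₂ s with hD
  have hDcont : ContinuousOn D (Set.Icc 0 t₁) := hcont₁.sub hcont₂
  set Sset : Set ℝ := Set.Icc 0 t₁ ∩ D ⁻¹' Set.Ici 0 with hSset
  have hSclosed : IsClosed Sset :=
    hDcont.preimage_isClosed_of_isClosed isClosed_Icc isClosed_Ici
  have h0S : (0:ℝ) ∈ Sset := by
    refine ⟨⟨le_rfl, ht₁0⟩, ?_⟩
    simp only [Set.mem_preimage, Set.mem_Ici, hD]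
    linarith [hE0.ge, hE0.le]
  have hbddS : BddAbove Sset := ⟨t₁, fun x hx => hx.1.2⟩
  set s₀ : ℝ := sSup Sset with hs₀def
  have hs₀mem : s₀ ∈ Sset := hSclosed.csSup_mem ⟨0, h0S⟩ hbddS
  have hs₀0 : 0 ≤ s₀ := hs₀mem.1.1
  have hs₀t : s₀ ≤ t₁ := hs₀mem.1.2
  have hDs₀ : 0 ≤ D s₀ := hs₀mem.2
  have hs₀lt : s₀ < t₁ := by
    rcases lt_or_eq_of_le hs₀t with h | h
    · exact h
    · exfalso
      rw [h] at hDs₀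
      simp only [hD] at hDs₀
      linarith
  have hbetween : ∀ s ∈ Set.Ioc s₀ t₁, E₁ s ≤ E₂ s := by
    intro s hs
    by_contra hgt
    push_neg at hgt
    have hmem : s ∈ Sset := by
      refine ⟨⟨hs₀0.trans hs.1.le, hs.2⟩, ?_⟩
      simp only [Set.mem_preimage, Set.mem_Ici, hD]
      linarith
    exact absurd (le_csSup hbddS hmem) (not_le.mpr hs.1)
  have hsub : Set.uIcc s₀ t₁ ⊆ Set.uIcc 0 t₁ := by
    rw [Set.uIcc_of_le ht₁0, Set.uIcc_of_le hs₀lt.le]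
    exact Set.Icc_subset_Icc hs₀0 le_rfl
  have hi₁' : IntervalIntegrable g₁ volume s₀ t₁ := (hint₁ t₁ ht₁0).mono_set hsub
  have hi₂' : IntervalIntegrable g₂ volume s₀ t₁ := (hint₂ t₁ ht₁0).mono_set hsub
  have hsplit₁ : E₁ t₁ = E₁ s₀ + ∫ s in s₀..t₁, g₁ s := by
    rw [hE₁ t₁ ht₁0, hE₁ s₀ hs₀0, add_assoc,
      intervalIntegral.integral_add_adjacent_intervals (hint₁ s₀ hs₀0) hi₁']
  have hsplit₂ : E₂ t₁ = E₂ s₀ + ∫ s in s₀..t₁, g₂ s := by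
    rw [hE₂ t₁ ht₁0, hE₂ s₀ hs₀0, add_assoc,
      intervalIntegral.integral_add_adjacent_intervals (hint₂ s₀ hs₀0) hi₂']
  have hle : ∫ s in s₀..t₁, g₂ s ≤ ∫ s in s₀..t₁, g₁ s := by
    rw [intervalIntegral.integral_of_le hs₀lt.le, intervalIntegral.integral_of_le hs₀lt.le]
    refine setIntegral_mono_on
      ((intervalIntegrable_iff_integrableOn_Ioc_of_le hs₀lt.le).mp hi₂')
      ((intervalIntegrable_iff_integrableOn_Ioc_of_le hs₀lt.le).mp hi₁')
      measurableSet_Ioc ?_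
    intro s hs
    exact buffer_pt c δ hc hδ (hbetween s hs) (hmono s)
  have h1 : E₂ s₀ ≤ E₁ s₀ := by
    simp only [hD] at hDs₀
    linarith
  linarith [hsplit₁, hsplit₂]
end
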